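/- arXiv:1104.0399 — 5 statements merged into one kernel-verified Lean document; each statement's English description precedes it below -/
import Mathlib

section
/- Let r, s be natural numbers and let ω be the volume element of Cl(r,s). For every isometry equivalence f of Q_{r,s}, one has map f ω = (det f) • ω, where det f ∈ {1, -1} is the determinant of the underlying linear equivalence of ℝ^{r+s}. In particular, map f ω = ω for every special isometry equivalence f. -/
open CliffordAlgebra

/-- The quadratic form `Q_{r,s}` on `ℝ^{r+s}`:
`Q(x) = -(x_0² + ⋯ + x_{r-1}²) + (x_r² + ⋯ + x_{r+s-1}²)`. -/
noncomputable def Qrs (r s : ℕ) : QuadraticForm ℝ (Fin (r + s) → ℝ) :=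
  QuadraticMap.weightedSumSquares ℝ
    (fun i : Fin (r + s) => if (i : ℕ) < r then (-1 : ℝ) else 1)

/-- The volume element `ω = ι(e_0) * ι(e_1) * ⋯ * ι(e_{r+s-1})` of `Cl(r,s)`. -/
noncomputable def volumeElt (r s : ℕ) : CliffordAlgebra (Qrs r s) :=
  (List.ofFn (fun i : Fin (r + s) => ι (Qrs r s) (Pi.single i 1))).prod

/-- An isometry equivalence of `Q_{r,s}` is special if its determinant is `1`. -/
noncomputable def IsSpecial {r s : ℕ} (f : (Qrs r s).IsometryEquiv (Qrs r s)) : Prop :=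
  LinearEquiv.det f.toLinearEquiv = 1

section Aux

variable {R : Type*} [CommRing R] {M : Type*} [AddCommGroup M] [Module R M]

lemma contract_listProd_eq_zero (Q : QuadraticForm R M) (d : Module.Dual R M) :
    ∀ (L : List M), (∀ m ∈ L, d m = 0) →
      CliffordAlgebra.contractLeft (Q := Q) d (L.map (ι Q)).prod = 0
  | [], _ => by simp
  | (a :: L), h => by
    rw [List.map_cons, List.prod_cons, contractLeft_ι_mul,
      contract_listProd_eq_zero Q d L (fun m hm => h m (List.mem_cons_of_mem _ hm)),
      h a (List.mem_cons_self)]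
    simp

lemma changeForm_orth_listProd {Q Q' : QuadraticForm R M} {B : LinearMap.BilinForm R M}
    (h : B.toQuadraticMap = Q' - Q) :
    ∀ (L : List M), (L.Pairwise fun x y => B x y = 0) →
      changeForm h (L.map (ι Q)).prod = (L.map (ι Q')).prod
  | [], _ => by simp
  | (a :: L), hp => by
    rw [List.pairwise_cons] at hp
    rw [List.map_cons, List.prod_cons, changeForm_ι_mul,
      changeForm_orth_listProd h L hp.2,
      contract_listProd_eq_zero Q' (B a) L (fun m hm => hp.1 m hm),
      sub_zero, List.map_cons, List.prod_cons]

end Aux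

lemma alt_eq_det_smul {M N : Type*} [AddCommGroup M] [Module ℝ M] [AddCommGroup N] [Module ℝ N]
    {n : ℕ} (e : Module.Basis (Fin n) ℝ M) (g : M [⋀^Fin n]→ₗ[ℝ] N) (v : Fin n → M) :
    g v = e.det v • g e := by
  have : g = (e.det).smulRight (g e) := by
    refine Module.Basis.ext_alternating e fun i hinj => ?_
    let σ : Equiv.Perm (Fin n) := Equiv.ofBijective i (Finite.injective_iff_bijective.1 hinj)
    have h1 : (fun j => e (i j)) = (⇑e ∘ σ) := rfl
    rw [h1, AlternatingMap.smulRight_apply, AlternatingMap.map_perm, e.det.map_perm,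
      Module.Basis.det_self]
    rcases Int.units_eq_one_or (Equiv.Perm.sign σ) with hs | hs <;> simp [hs]
  rw [this, AlternatingMap.smulRight_apply, AlternatingMap.smulRight_apply, Module.Basis.det_self,
    one_smul]

lemma polar_Qrs_single {r s : ℕ} {i j : Fin (r + s)} (hij : i ≠ j) :
    QuadraticMap.polar (Qrs r s) (Pi.single i 1) (Pi.single j 1) = 0 := by
  simp only [QuadraticMap.polar, Qrs, QuadraticMap.weightedSumSquares_apply, smul_eq_mul]
  rw [← Finset.sum_sub_distrib, ← Finset.sum_sub_distrib]
  refine Finset.sum_eq_zero fun k _ => ?_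
  have h0 : ((Pi.single i 1 : Fin (r+s) → ℝ) k) * ((Pi.single j 1 : Fin (r+s) → ℝ) k) = (0:ℝ) := by
    rcases eq_or_ne k i with rfl | hk
    · rw [Pi.single_eq_of_ne hij, mul_zero]
    · rw [Pi.single_eq_of_ne hk, zero_mul]
  simp only [Pi.add_apply]
  linear_combination (2 * (if (k : ℕ) < r then (-1 : ℝ) else 1)) * h0

lemma Qrs_single {r s : ℕ} (i : Fin (r + s)) :
    Qrs r s (Pi.single i 1) = if (i : ℕ) < r then (-1 : ℝ) else 1 := by
  simp only [Qrs, QuadraticMap.weightedSumSquares_apply, smul_eq_mul]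
  rw [Finset.sum_eq_single i]
  · simp
  · intro k _ hk
    rw [Pi.single_eq_of_ne hk, mul_zero, mul_zero]
  · simp

lemma polar_isometry {r s : ℕ} (f : (Qrs r s).IsometryEquiv (Qrs r s)) (x y : Fin (r+s) → ℝ) :
    QuadraticMap.polar (Qrs r s) (f x) (f y) = QuadraticMap.polar (Qrs r s) x y := by
  simp only [QuadraticMap.polar, ← map_add, QuadraticMap.IsometryEquiv.map_app]

lemma assoc_eq_zero_of_polar {M : Type*} [AddCommGroup M] [Module ℝ M] (Q : QuadraticForm ℝ M)
    (x y : M) (h : QuadraticMap.polar Q x y = 0) :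
    QuadraticMap.associated (R := ℝ) Q x y = 0 := by
  rw [QuadraticMap.associated_apply]
  have h' : Q (x + y) - Q x - Q y = 0 := h
  rw [h', smul_zero]

lemma assoc_neg_eq_zero {M : Type*} [AddCommGroup M] [Module ℝ M] (Q : QuadraticForm ℝ M)
    (x y : M) (h : QuadraticMap.polar Q x y = 0) :
    QuadraticMap.associated (R := ℝ) (-Q) x y = 0 := by
  rw [QuadraticMap.associated_apply]
  have h' : Q (x + y) - Q x - Q y = 0 := h
  have h2 : (-Q) (x + y) - (-Q) x - (-Q) y = 0 := by
    simp only [QuadraticMap.neg_apply]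
    linarith [h']
  rw [h2, smul_zero]

lemma assoc_self_eq {M : Type*} [AddCommGroup M] [Module ℝ M] (Q : QuadraticForm ℝ M) (x : M) :
    QuadraticMap.associated (R := ℝ) Q x x = Q x := by
  conv_rhs => rw [← QuadraticMap.toQuadraticMap_associated ℝ Q]
  rfl

lemma equivExterior_orth_prod {r s : ℕ} (w : Fin (r + s) → (Fin (r + s) → ℝ))
    (hw : ∀ i j, i ≠ j → QuadraticMap.polar (Qrs r s) (w i) (w j) = 0) :
    equivExterior (Qrs r s) (List.ofFn fun i => ι (Qrs r s) (w i)).prod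
      = ExteriorAlgebra.ιMulti ℝ (r + s) w := by
  have h1 : (List.ofFn fun i => ι (Qrs r s) (w i)) = (List.ofFn w).map (ι (Qrs r s)) := by
    rw [List.map_ofFn]; rfl
  have h2 : ExteriorAlgebra.ιMulti ℝ (r + s) w
      = ((List.ofFn w).map (CliffordAlgebra.ι (0 : QuadraticForm ℝ (Fin (r+s) → ℝ)))).prod := by
    rw [ExteriorAlgebra.ιMulti_apply, List.map_ofFn]; rfl
  have hpair : (List.ofFn w).Pairwise
      (fun x y => QuadraticMap.associated (R := ℝ) (-(Qrs r s)) x y = 0) := by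
    rw [List.pairwise_ofFn]
    exact fun i j hij => assoc_neg_eq_zero _ _ _ (hw i j (ne_of_lt hij))
  rw [h1, h2]
  simp only [equivExterior, changeFormEquiv_apply]
  exact changeForm_orth_listProd _ _ hpair

/-- For every isometry equivalence `f` of `Q_{r,s}`, one has `det f ∈ {1, -1}` and
`map f ω = (det f) • ω`; in particular `map f ω = ω` when `f` is special. -/
theorem map_volumeElt_eq_det_smul (r s : ℕ)
    (f : (Qrs r s).IsometryEquiv (Qrs r s)) :
    (((LinearEquiv.det f.toLinearEquiv : ℝˣ) : ℝ) = 1 ∨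
      ((LinearEquiv.det f.toLinearEquiv : ℝˣ) : ℝ) = -1) ∧
    CliffordAlgebra.map f.toIsometry (volumeElt r s) =
      ((LinearEquiv.det f.toLinearEquiv : ℝˣ) : ℝ) • volumeElt r s ∧
    (IsSpecial f →
      CliffordAlgebra.map f.toIsometry (volumeElt r s) = volumeElt r s) := by
  classical
  let e : Module.Basis (Fin (r+s)) ℝ (Fin (r+s) → ℝ) := Pi.basisFun ℝ (Fin (r + s))
  let fl : (Fin (r + s) → ℝ) →ₗ[ℝ] (Fin (r + s) → ℝ) := f.toLinearEquiv
  have hfl : ∀ x, fl x = f x := fun x => rfl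
  have hee : (fun i : Fin (r+s) => (Pi.single i 1 : Fin (r+s) → ℝ)) = ⇑e := by
    funext i; exact (Pi.basisFun_apply ℝ (Fin (r+s)) i).symm
  have hcoe : ((LinearEquiv.det f.toLinearEquiv : ℝˣ) : ℝ) = LinearMap.det fl :=
    LinearEquiv.coe_det _
  -- the image of the volume element
  have hmap : CliffordAlgebra.map f.toIsometry (volumeElt r s)
      = (List.ofFn fun i => ι (Qrs r s) (f (Pi.single i 1))).prod := by
    rw [volumeElt, map_list_prod, List.map_ofFn]
    refine congrArg List.prod (congrArg List.ofFn (funext fun i => ?_))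
    show (CliffordAlgebra.map f.toIsometry) (ι (Qrs r s) (Pi.single i 1)) = ι (Qrs r s) (f (Pi.single i 1))
    rw [map_apply_ι]
    rfl
  have horth_e : ∀ i j : Fin (r+s), i ≠ j →
      QuadraticMap.polar (Qrs r s) (Pi.single i 1) (Pi.single j 1) = 0 :=
    fun _ _ h => polar_Qrs_single h
  have horth_w : ∀ i j : Fin (r+s), i ≠ j →
      QuadraticMap.polar (Qrs r s) (f (Pi.single i 1)) (f (Pi.single j 1)) = 0 := fun i j h => by
    rw [polar_isometry]; exact polar_Qrs_single h
  have hE1 : equivExterior (Qrs r s) (volumeElt r s)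
      = ExteriorAlgebra.ιMulti ℝ (r+s) (fun i => Pi.single i 1) :=
    equivExterior_orth_prod _ horth_e
  have hE2 : equivExterior (Qrs r s) (CliffordAlgebra.map f.toIsometry (volumeElt r s))
      = ExteriorAlgebra.ιMulti ℝ (r+s) (fun i => f (Pi.single i 1)) := by
    rw [hmap]; exact equivExterior_orth_prod _ horth_w
  have hdet_e : e.det (fun i => f (Pi.single i 1)) = LinearMap.det fl := by
    have hc : (fun i => f (Pi.single i 1)) = ⇑fl ∘ ⇑e := by
      funext i
      rw [← hfl, ← hee]
      rfl
    rw [hc, Module.Basis.det_comp_basis, Module.Basis.equiv_refl, LinearEquiv.refl_toLinearMap,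
      LinearMap.comp_id]
  have key : ExteriorAlgebra.ιMulti ℝ (r+s) (fun i => f (Pi.single i 1))
      = LinearMap.det fl • ExteriorAlgebra.ιMulti ℝ (r+s) (fun i => Pi.single i 1) := by
    rw [alt_eq_det_smul e _ (fun i => f (Pi.single i 1)), hdet_e, hee]
  have hmain : CliffordAlgebra.map f.toIsometry (volumeElt r s)
      = LinearMap.det fl • volumeElt r s := by
    apply (equivExterior (Qrs r s)).injective
    rw [map_smul, hE2, hE1, key]
  -- determinant is ±1
  have hBpres : (QuadraticMap.associated (R := ℝ) (Qrs r s)).compl₁₂ fl fl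
      = QuadraticMap.associated (R := ℝ) (Qrs r s) := by
    refine LinearMap.ext fun x => LinearMap.ext fun y => ?_
    show QuadraticMap.associated (R := ℝ) (Qrs r s) (fl x) (fl y)
      = QuadraticMap.associated (R := ℝ) (Qrs r s) x y
    rw [QuadraticMap.associated_apply, QuadraticMap.associated_apply, hfl, hfl,
      ← map_add, QuadraticMap.IsometryEquiv.map_app,
      QuadraticMap.IsometryEquiv.map_app, QuadraticMap.IsometryEquiv.map_app]
  have hmat : (LinearMap.toMatrix e e fl).transpose
        * LinearMap.toMatrix₂ e e (QuadraticMap.associated (R := ℝ) (Qrs r s))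
        * LinearMap.toMatrix e e fl
      = LinearMap.toMatrix₂ e e (QuadraticMap.associated (R := ℝ) (Qrs r s)) := by
    rw [← LinearMap.toMatrix₂_compl₁₂ e e, hBpres]
  have hG : LinearMap.toMatrix₂ e e (QuadraticMap.associated (R := ℝ) (Qrs r s))
      = Matrix.diagonal (fun i : Fin (r+s) => if (i : ℕ) < r then (-1 : ℝ) else 1) := by
    ext i j
    rw [LinearMap.toMatrix₂_apply]
    rcases eq_or_ne i j with rfl | hij
    · rw [Matrix.diagonal_apply_eq]
      simp only [← hee]
      rw [assoc_self_eq]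
      exact Qrs_single i
    · rw [Matrix.diagonal_apply_ne _ hij]
      simp only [← hee]
      exact assoc_eq_zero_of_polar _ _ _ (horth_e i j hij)
  have hGdet : (LinearMap.toMatrix₂ e e (QuadraticMap.associated (R := ℝ) (Qrs r s))).det ≠ 0 := by
    rw [hG, Matrix.det_diagonal]
    refine Finset.prod_ne_zero_iff.2 fun i _ => ?_
    split <;> norm_num
  have hdetA : LinearMap.det fl = (LinearMap.toMatrix e e fl).det :=
    (LinearMap.det_toMatrix e fl).symm
  have hsq : LinearMap.det fl * LinearMap.det fl = 1 := by
    have h1 := congrArg Matrix.det hmat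
    rw [Matrix.det_mul, Matrix.det_mul, Matrix.det_transpose] at h1
    rw [hdetA]
    refine mul_right_cancel₀ hGdet ?_
    rw [one_mul]
    linear_combination h1
  refine ⟨?_, ?_, ?_⟩
  · rw [hcoe]; exact mul_self_eq_one_iff.mp hsq
  · rw [hcoe]; exact hmain
  · intro hsp
    have hsp' : LinearEquiv.det f.toLinearEquiv = 1 := hsp
    have h1 : ((LinearEquiv.det f.toLinearEquiv : ℝˣ) : ℝ) = 1 := by
      rw [hsp']; rfl
    rw [hmain, ← hcoe, h1, one_smul]
end

section
/- Let r, s be natural numbers with r + s ≥ 1, and let ω be the volume element of Cl(r,s). Suppose J : Cl(r,s) → Cl(r,s) is an ℝ-linear map satisfying (i) J ∘ J = -id, (ii) J(x*y) = x * J(y) for all x, y ∈ Cl(r,s), and (iii) J(map f x) = map f (J x) for every special isometry equivalence f of Q_{r,s}. Then ω² = -1, and J(1) = ω or J(1) = -ω (hence J is right multiplication by ω or by -ω). -/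
open CliffordAlgebra

open scoped symmDiff

namespace Hlp
variable (r s : ℕ)

noncomputable def wt : Fin (r + s) → ℝ := fun i => if (i : ℕ) < r then (-1 : ℝ) else 1

lemma wt_mul_self (i : Fin (r + s)) : wt r s i * wt r s i = 1 := by
  unfold wt; split <;> norm_num

lemma Qrs_apply (v : Fin (r + s) → ℝ) :
    Qrs r s v = ∑ i, wt r s i * (v i * v i) := by
  simp [Qrs, QuadraticMap.weightedSumSquares_apply, wt, smul_eq_mul]

lemma Qrs_single (i : Fin (r + s)) (c : ℝ) :
    Qrs r s (Pi.single i c) = wt r s i * (c * c) := by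
  rw [Qrs_apply]
  rw [Finset.sum_eq_single i]
  · simp
  · intro b _ hb
    simp [Pi.single_apply, hb]
  · simp

lemma Qrs_isOrtho {i j : Fin (r + s)} (h : i ≠ j) :
    (Qrs r s).IsOrtho (Pi.single i 1) (Pi.single j 1) := by
  rw [QuadraticMap.isOrtho_def, Qrs_apply, Qrs_single, Qrs_single]
  have : ∀ k, wt r s k * (((Pi.single i 1 + Pi.single j 1) : Fin (r+s) → ℝ) k *
      ((Pi.single i 1 + Pi.single j 1) : Fin (r+s) → ℝ) k)
      = (if k = i then wt r s i else 0) + (if k = j then wt r s j else 0) := by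
    intro k
    by_cases hki : k = i
    · subst hki
      simp [Pi.single_apply, h]
    · by_cases hkj : k = j
      · subst hkj
        simp [Pi.single_apply, hki, Ne.symm h]
      · simp [Pi.single_apply, hki, hkj]
  rw [Finset.sum_congr rfl (fun k _ => this k), Finset.sum_add_distrib]
  simp [Finset.sum_ite_eq']


/-- generator -/
noncomputable def gen (i : Fin (r + s)) : CliffordAlgebra (Qrs r s) :=
  ι (Qrs r s) (Pi.single i 1)

/-- basis element indexed by a finset -/
noncomputable def eS (S : Finset (Fin (r + s))) : CliffordAlgebra (Qrs r s) :=
  ((S.sort (· ≤ ·)).map (gen r s)).prod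

lemma eS_empty : eS r s ∅ = 1 := by simp [eS]

lemma eS_singleton (i : Fin (r + s)) : eS r s {i} = gen r s i := by
  simp [eS, Finset.sort_singleton]

lemma sort_min'_cons (S : Finset (Fin (r + s))) (hS : S.Nonempty) :
    S.sort (· ≤ ·) = S.min' hS :: (S.erase (S.min' hS)).sort (· ≤ ·) := by
  conv_lhs => rw [← Finset.insert_erase (S.min'_mem hS)]
  exact Finset.sort_insert _ (fun b hb => S.min'_le b (Finset.mem_of_mem_erase hb))
    (Finset.notMem_erase _ _)

lemma eS_min'_cons (S : Finset (Fin (r + s))) (hS : S.Nonempty) :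
    eS r s S = gen r s (S.min' hS) * eS r s (S.erase (S.min' hS)) := by
  rw [eS, sort_min'_cons r s S hS]; simp [eS]

lemma sort_insert_of_lt {S : Finset (Fin (r + s))} {i : Fin (r + s)}
    (h : ∀ b ∈ S, i < b) :
    (insert i S).sort (· ≤ ·) = i :: S.sort (· ≤ ·) :=
  Finset.sort_insert _ (fun b hb => (h b hb).le) (fun hi => absurd (h i hi) (lt_irrefl i))

lemma eS_insert_of_lt {S : Finset (Fin (r + s))} {i : Fin (r + s)}
    (h : ∀ b ∈ S, i < b) :
    eS r s (insert i S) = gen r s i * eS r s S := by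
  rw [eS, sort_insert_of_lt r s h]; simp [eS]

lemma singleton_symmDiff_of_not_mem {S : Finset (Fin (r + s))} {i : Fin (r + s)}
    (h : i ∉ S) : {i} ∆ S = insert i S := by
  ext x
  simp only [Finset.mem_symmDiff, Finset.mem_singleton, Finset.mem_insert]
  constructor
  · rintro (⟨rfl, -⟩ | ⟨hx, -⟩) <;> tauto
  · rintro (rfl | hx)
    · exact Or.inl ⟨rfl, h⟩
    · exact Or.inr ⟨hx, fun hxi => h (hxi ▸ hx)⟩

lemma singleton_symmDiff_of_mem {S : Finset (Fin (r + s))} {i : Fin (r + s)}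
    (h : i ∈ S) : {i} ∆ S = S.erase i := by
  ext x
  simp only [Finset.mem_symmDiff, Finset.mem_singleton, Finset.mem_erase]
  constructor
  · rintro (⟨rfl, hx⟩ | ⟨hx, hxi⟩)
    · exact absurd h hx
    · exact ⟨hxi, hx⟩
  · rintro ⟨hxi, hx⟩
    exact Or.inr ⟨hx, hxi⟩

lemma gen_mul_gen_self (i : Fin (r + s)) :
    gen r s i * gen r s i = algebraMap ℝ _ (wt r s i) := by
  rw [gen, ι_sq_scalar, Qrs_single]; norm_num

lemma gen_anticomm {i j : Fin (r + s)} (h : i ≠ j) :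
    gen r s i * gen r s j = -(gen r s j * gen r s i) :=
  ι_mul_ι_comm_of_isOrtho (Qrs_isOrtho r s h)

/-- Key multiplication lemma. -/
lemma gen_mul_eS (S : Finset (Fin (r + s))) (i : Fin (r + s)) :
    ∃ c : ℝ, c * c = 1 ∧ gen r s i * eS r s S = c • eS r s ({i} ∆ S) := by
  induction S using Finset.strongInduction with
  | _ S ih =>
    rcases S.eq_empty_or_nonempty with rfl | hS
    · refine ⟨1, by norm_num, ?_⟩
      simp [eS_empty, singleton_symmDiff_of_not_mem r s (Finset.notMem_empty i),
        eS_singleton]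
    · set h := S.min' hS with hh
      set T := S.erase h with hT
      have hTS : T ⊂ S := Finset.erase_ssubset (S.min'_mem hS)
      have hhT : h ∉ T := Finset.notMem_erase _ _
      have hTgt : ∀ b ∈ T, h < b := by
        intro b hb
        exact lt_of_le_of_ne (S.min'_le b (Finset.mem_of_mem_erase hb))
          (Ne.symm (Finset.ne_of_mem_erase hb))
      rcases lt_trichotomy i h with hih | heq | hih
      · -- i < min, so i ∉ S
        have hiS : i ∉ S := fun hiS => absurd (S.min'_le i hiS) (not_le.mpr hih)
        refine ⟨1, by norm_num, ?_⟩
        rw [singleton_symmDiff_of_not_mem r s hiS, one_smul,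
          eS_insert_of_lt r s (fun b hb => lt_of_lt_of_le hih (S.min'_le b hb))]
      · -- i = min
        refine ⟨wt r s h, wt_mul_self r s h, ?_⟩
        have hiS : i ∈ S := heq ▸ S.min'_mem hS
        rw [singleton_symmDiff_of_mem r s hiS, eS_min'_cons r s S hS, ← hh, ← hT,
          ← mul_assoc, heq, gen_mul_gen_self, Algebra.smul_def]
      · -- i > min
        have hih' : i ≠ h := ne_of_gt hih
        obtain ⟨c, hc, hmul⟩ := ih T hTS
        have hiT' : h ∉ ({i} ∆ T) := by
          rw [Finset.mem_symmDiff]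
          push_neg
          exact ⟨fun hhi => absurd (Finset.mem_singleton.mp hhi) (Ne.symm hih'), fun h' => (hhT h').elim⟩
        have hgtT : ∀ b ∈ ({i} ∆ T), h < b := by
          intro b hb
          rw [Finset.mem_symmDiff] at hb
          rcases hb with ⟨hb, -⟩ | ⟨hb, -⟩
          · rw [Finset.mem_singleton] at hb; exact hb ▸ hih
          · exact hTgt b hb
        refine ⟨-c, by rw [neg_mul_neg]; exact hc, ?_⟩
        rw [eS_min'_cons r s S hS, ← hh, ← hT, ← mul_assoc, gen_anticomm r s hih',
          neg_mul, mul_assoc, hmul, mul_smul_comm,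
          ← eS_insert_of_lt r s hgtT]
        have : insert h ({i} ∆ T) = {i} ∆ S := by
          have h1 : {i} ∆ S = {i} ∆ (insert h T) := by
            rw [hT, Finset.insert_erase (S.min'_mem hS)]
          rw [h1]
          ext x
          simp only [Finset.mem_insert, Finset.mem_symmDiff, Finset.mem_singleton]
          constructor
          · rintro (rfl | (⟨rfl, hx⟩ | ⟨hx, hxi⟩))
            · exact Or.inr ⟨Or.inl rfl, Ne.symm hih'⟩
            · exact Or.inl ⟨rfl, fun hc => hc.elim (fun h' => hih' h') hx⟩
            · exact Or.inr ⟨Or.inr hx, hxi⟩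
          · rintro (⟨rfl, hx⟩ | ⟨hx, hxi⟩)
            · refine Or.inr (Or.inl ⟨rfl, fun hc => hx (Or.inr hc)⟩)
            · rcases hx with rfl | hx
              · exact Or.inl rfl
              · exact Or.inr (Or.inr ⟨hx, hxi⟩)
        rw [this, neg_smul]
  

abbrev V (r s : ℕ) := Finset (Fin (r + s)) → ℝ

noncomputable def sgn (i : Fin (r + s)) (S : Finset (Fin (r + s))) : ℝ :=
  (-1) ^ ((S.filter (· < i)).card)

lemma sgn_mul_self (i : Fin (r + s)) (S : Finset (Fin (r + s))) :
    sgn r s i S * sgn r s i S = 1 := by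
  rw [sgn, ← pow_add, ← two_mul, pow_mul]; norm_num

noncomputable def mcoef (i : Fin (r + s)) (S : Finset (Fin (r + s))) : ℝ :=
  sgn r s i S * (if i ∈ S then 1 else wt r s i)

noncomputable def op (i : Fin (r + s)) : V r s →ₗ[ℝ] V r s where
  toFun φ := fun S => mcoef r s i S * φ ({i} ∆ S)
  map_add' φ ψ := by funext S; simp [mul_add]
  map_smul' c φ := by funext S; simp only [Pi.smul_apply, smul_eq_mul, RingHom.id_apply]; ring

lemma op_apply (i : Fin (r + s)) (φ : V r s) (S : Finset (Fin (r + s))) :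
    op r s i φ S = mcoef r s i S * φ ({i} ∆ S) := rfl

lemma mem_symmDiff_singleton {i j : Fin (r + s)} (h : i ≠ j) (S : Finset (Fin (r + s))) :
    i ∈ ({j} ∆ S) ↔ i ∈ S := by
  simp only [Finset.mem_symmDiff, Finset.mem_singleton]
  constructor
  · rintro (⟨rfl, -⟩ | ⟨hx, -⟩)
    · exact absurd rfl h
    · exact hx
  · intro hi
    exact Or.inr ⟨hi, h⟩

lemma filter_symmDiff_not_lt {i j : Fin (r + s)} (h : ¬ j < i) (S : Finset (Fin (r + s))) :
    (({j} ∆ S).filter (· < i)) = S.filter (· < i) := by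
  ext x
  simp only [Finset.mem_filter, Finset.mem_symmDiff, Finset.mem_singleton]
  constructor
  · rintro ⟨(⟨rfl, -⟩ | ⟨hx, -⟩), hlt⟩
    · exact absurd hlt h
    · exact ⟨hx, hlt⟩
  · rintro ⟨hx, hlt⟩
    exact ⟨Or.inr ⟨hx, fun hxj => h (hxj ▸ hlt)⟩, hlt⟩

lemma sgn_symmDiff_not_lt {i j : Fin (r + s)} (h : ¬ j < i) (S : Finset (Fin (r + s))) :
    sgn r s i ({j} ∆ S) = sgn r s i S := by
  rw [sgn, sgn, filter_symmDiff_not_lt r s h]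

lemma mcoef_symmDiff_ne {i j : Fin (r + s)} (hji : ¬ j < i) (hij : i ≠ j)
    (S : Finset (Fin (r + s))) : mcoef r s i ({j} ∆ S) = mcoef r s i S := by
  rw [mcoef, mcoef, sgn_symmDiff_not_lt r s hji]
  congr 1
  simp [mem_symmDiff_singleton r s hij]

lemma symmDiff_singleton_eq {i : Fin (r + s)} {S : Finset (Fin (r + s))} :
    {i} ∆ S = if i ∈ S then S.erase i else insert i S := by
  split <;> rename_i h <;> ext x <;>
    simp only [Finset.mem_symmDiff, Finset.mem_singleton, Finset.mem_erase, Finset.mem_insert] <;>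
    constructor
  · rintro (⟨rfl, hx⟩ | ⟨hx, hxi⟩)
    · exact absurd h hx
    · exact ⟨hxi, hx⟩
  · rintro ⟨hxi, hx⟩; exact Or.inr ⟨hx, hxi⟩
  · rintro (⟨rfl, -⟩ | ⟨hx, hxi⟩)
    · exact Or.inl rfl
    · exact Or.inr hx
  · rintro (rfl | hx)
    · exact Or.inl ⟨rfl, h⟩
    · exact Or.inr ⟨hx, fun hxi => h (hxi ▸ hx)⟩

lemma sgn_symmDiff_lt {i j : Fin (r + s)} (hij : i < j) (S : Finset (Fin (r + s))) :
    sgn r s j ({i} ∆ S) = -sgn r s j S := by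
  rw [sgn, sgn, symmDiff_singleton_eq]
  by_cases h : i ∈ S
  · rw [if_pos h, Finset.filter_erase]
    have hi : i ∈ S.filter (· < j) := Finset.mem_filter.mpr ⟨h, hij⟩
    rw [Finset.card_erase_of_mem hi]
    have hpos : 1 ≤ (S.filter (· < j)).card := Finset.card_pos.mpr ⟨i, hi⟩
    have : (S.filter (· < j)).card = ((S.filter (· < j)).card - 1) + 1 :=
      (Nat.succ_pred_eq_of_pos hpos).symm
    rw [this]
    simp only [Nat.add_sub_cancel]
    rw [pow_succ]
    ring
  · rw [if_neg h, Finset.filter_insert, if_pos hij,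
      Finset.card_insert_of_notMem (fun hc => h (Finset.mem_filter.mp hc).1), pow_succ]
    ring

lemma op_op_same (i : Fin (r + s)) (φ : V r s) :
    op r s i (op r s i φ) = wt r s i • φ := by
  funext S
  rw [op_apply, op_apply, symmDiff_symmDiff_cancel_left]
  have hmem : i ∈ ({i} ∆ S) ↔ i ∉ S := by
    simp only [Finset.mem_symmDiff, Finset.mem_singleton]
    tauto
  have h1 : mcoef r s i S * mcoef r s i ({i} ∆ S) = wt r s i := by
    rw [mcoef, mcoef, sgn_symmDiff_not_lt r s (lt_irrefl i) S]
    have hs := sgn_mul_self r s i S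
    by_cases h : i ∈ S
    · rw [if_pos h, if_neg (fun hc => (hmem.mp hc) h), mul_one]
      calc sgn r s i S * (sgn r s i S * wt r s i)
          = (sgn r s i S * sgn r s i S) * wt r s i := by ring
        _ = wt r s i := by rw [hs, one_mul]
    · rw [if_neg h, if_pos (hmem.mpr h), mul_one]
      calc sgn r s i S * wt r s i * sgn r s i S
          = (sgn r s i S * sgn r s i S) * wt r s i := by ring
        _ = wt r s i := by rw [hs, one_mul]
  calc mcoef r s i S * (mcoef r s i ({i} ∆ S) * φ S)
      = (mcoef r s i S * mcoef r s i ({i} ∆ S)) * φ S := by ring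
    _ = wt r s i • φ S := by rw [h1]; rfl

lemma op_op_anti_lt {i j : Fin (r + s)} (hij : i < j) (φ : V r s) :
    op r s i (op r s j φ) + op r s j (op r s i φ) = 0 := by
  funext S
  simp only [Pi.add_apply, Pi.zero_apply, op_apply]
  have h1 : mcoef r s j ({i} ∆ S) = -mcoef r s j S := by
    rw [mcoef, mcoef, sgn_symmDiff_lt r s hij]
    have : j ∈ ({i} ∆ S) ↔ j ∈ S := mem_symmDiff_singleton r s (ne_of_gt hij) S
    rw [if_congr this rfl rfl]; ring
  have h2 : mcoef r s i ({j} ∆ S) = mcoef r s i S :=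
    mcoef_symmDiff_ne r s (fun hc => absurd (lt_trans hij hc) (lt_irrefl i)) (ne_of_lt hij) S
  rw [h1, h2, symmDiff_left_comm]
  ring

lemma op_op_anti {i j : Fin (r + s)} (hij : i ≠ j) (φ : V r s) :
    op r s i (op r s j φ) + op r s j (op r s i φ) = 0 := by
  rcases lt_or_gt_of_ne hij with h | h
  · exact op_op_anti_lt r s h φ
  · rw [add_comm]; exact op_op_anti_lt r s h φ

/-- the action of vectors -/
noncomputable def fQ : (Fin (r + s) → ℝ) →ₗ[ℝ] Module.End ℝ (V r s) where
  toFun v := ∑ i, v i • op r s i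
  map_add' u v := by simp [add_smul, Finset.sum_add_distrib]
  map_smul' c v := by
    simp only [Pi.smul_apply, smul_eq_mul, RingHom.id_apply, Finset.smul_sum, mul_smul]

lemma double_sum_eq_diag {M : Type*} [AddCommGroup M] [Module ℝ M]
    {ι : Type*} [Fintype ι] [DecidableEq ι] (F : ι → ι → M)
    (hanti : ∀ i j, j ≠ i → F i j + F j i = 0) :
    ∑ i, ∑ j, F i j = ∑ i, F i i := by
  have hAA : (∑ i, ∑ j, F i j) + (∑ i, ∑ j, F i j) = ∑ i, (F i i + F i i) := by
    conv_lhs => rw [show (∑ i, ∑ j, F i j) + (∑ i, ∑ j, F i j)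
      = (∑ i, ∑ j, F i j) + (∑ j, ∑ i, F i j) from by rw [Finset.sum_comm]]
    rw [← Finset.sum_add_distrib]
    refine Finset.sum_congr rfl fun i _ => ?_
    rw [← Finset.sum_add_distrib]
    rw [Finset.sum_eq_single i]
    · intro b _ hb
      exact hanti i b hb
    · intro hb
      exact absurd (Finset.mem_univ i) hb
  have h2 : (2 : ℝ) • (∑ i, ∑ j, F i j) = (2 : ℝ) • (∑ i, F i i) := by
    rw [two_smul, two_smul, hAA, Finset.sum_add_distrib]
  exact smul_right_injective M (two_ne_zero (α := ℝ)) h2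

lemma fQ_sq (v : Fin (r + s) → ℝ) :
    fQ r s v * fQ r s v = algebraMap ℝ (Module.End ℝ (V r s)) (Qrs r s v) := by
  have hexp : fQ r s v * fQ r s v
      = ∑ i, ∑ j, (v i * v j) • (op r s i * op r s j) := by
    show (∑ i, v i • op r s i) * (∑ j, v j • op r s j) = _
    rw [Finset.sum_mul]
    refine Finset.sum_congr rfl fun i _ => ?_
    rw [Finset.mul_sum]
    refine Finset.sum_congr rfl fun j _ => ?_
    rw [smul_mul_smul_comm]
  have key : ∑ i, ∑ j, (v i * v j) • (op r s i * op r s j)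
      = ∑ i, (v i * v i) • (op r s i * op r s i) :=
    double_sum_eq_diag _ (fun i j hji => by
      have hz : op r s i * op r s j + op r s j * op r s i = 0 :=
        LinearMap.ext fun φ => op_op_anti r s (Ne.symm hji) φ
      rw [mul_comm (v j) (v i), ← smul_add, hz, smul_zero])
  have hdiag : ∑ i, (v i * v i) • (op r s i * op r s i)
      = algebraMap ℝ (Module.End ℝ (V r s)) (Qrs r s v) := by
    have hterm : ∀ i, (v i * v i) • (op r s i * op r s i)
        = (wt r s i * (v i * v i)) • (1 : Module.End ℝ (V r s)) := by
      intro i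
      have hsq : op r s i * op r s i = wt r s i • (1 : Module.End ℝ (V r s)) :=
        LinearMap.ext fun φ => op_op_same r s i φ
      rw [hsq, smul_smul]
      ring_nf
    rw [Finset.sum_congr rfl fun i _ => hterm i, ← Finset.sum_smul, ← Qrs_apply,
      Algebra.algebraMap_eq_smul_one]
  rw [hexp, key, hdiag]



noncomputable def rep : CliffordAlgebra (Qrs r s) →ₐ[ℝ] Module.End ℝ (V r s) :=
  CliffordAlgebra.lift (Qrs r s) ⟨fQ r s, fQ_sq r s⟩

lemma rep_ι (v : Fin (r + s) → ℝ) : rep r s (ι (Qrs r s) v) = fQ r s v :=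
  CliffordAlgebra.lift_ι_apply _ _ _

noncomputable def Phi : CliffordAlgebra (Qrs r s) →ₗ[ℝ] V r s where
  toFun x := rep r s x (Pi.single ∅ 1)
  map_add' x y := by simp
  map_smul' c x := by simp

lemma fQ_single (h : Fin (r + s)) : fQ r s (Pi.single h 1) = op r s h := by
  have h0 : fQ r s (Pi.single h 1) = ∑ i, (Pi.single h 1 : Fin (r + s) → ℝ) i • op r s i := rfl
  rw [h0, Finset.sum_eq_single h]
  · simp
  · intro b _ hb
    rw [Pi.single_apply, if_neg hb, zero_smul]
  · intro hb
    exact absurd (Finset.mem_univ h) hb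

lemma op_single_min {h : Fin (r + s)} {T : Finset (Fin (r + s))}
    (hT : h ∉ T) (hlt : ∀ x ∈ T, h < x) :
    op r s h (Pi.single T 1) = Pi.single (insert h T) 1 := by
  funext S
  rw [op_apply]
  by_cases hS : S = insert h T
  · subst hS
    have h1 : {h} ∆ (insert h T) = T := by
      rw [singleton_symmDiff_of_mem r s (Finset.mem_insert_self h T),
        Finset.erase_insert hT]
    rw [h1, Pi.single_apply, if_pos rfl, Pi.single_apply, if_pos rfl, mul_one]
    rw [mcoef, if_pos (Finset.mem_insert_self h T), mul_one, sgn]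
    have h2 : (insert h T).filter (· < h) = ∅ := by
      rw [Finset.filter_eq_empty_iff]
      intro x hx
      rcases Finset.mem_insert.mp hx with rfl | hx
      · exact lt_irrefl x
      · exact asymm (hlt x hx)
    rw [h2, Finset.card_empty, pow_zero]
  · have h3 : {h} ∆ S ≠ T := by
      intro hc
      apply hS
      have := congrArg (fun X => {h} ∆ X) hc
      simp only [symmDiff_symmDiff_cancel_left] at this
      rw [this, singleton_symmDiff_of_not_mem r s hT]
    rw [Pi.single_apply, if_neg h3, mul_zero, Pi.single_apply, if_neg hS]

lemma Phi_eS (S : Finset (Fin (r + s))) : Phi r s (eS r s S) = Pi.single S 1 := by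
  induction S using Finset.strongInduction with
  | _ S ih =>
    rcases S.eq_empty_or_nonempty with rfl | hS
    · rw [eS_empty]
      show rep r s 1 (Pi.single ∅ 1) = Pi.single ∅ 1
      rw [map_one]
      rfl
    · set h := S.min' hS with hh
      set T := S.erase h with hT
      have hTS : T ⊂ S := Finset.erase_ssubset (S.min'_mem hS)
      have hhT : h ∉ T := Finset.notMem_erase _ _
      have hTgt : ∀ b ∈ T, h < b := fun b hb =>
        lt_of_le_of_ne (S.min'_le b (Finset.mem_of_mem_erase hb))
          (Ne.symm (Finset.ne_of_mem_erase hb))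
      have : Phi r s (eS r s S) = rep r s (gen r s h) (Phi r s (eS r s T)) := by
        rw [eS_min'_cons r s S hS, ← hh, ← hT]
        show rep r s (gen r s h * eS r s T) (Pi.single ∅ 1) = _
        rw [map_mul]
        rfl
      rw [this, ih T hTS, gen, rep_ι, fQ_single, op_single_min r s hhT hTgt,
        Finset.insert_erase (S.min'_mem hS)]

lemma eS_linearIndependent : LinearIndependent ℝ (eS r s) := by
  apply LinearIndependent.of_comp (Phi r s)
  have : (Phi r s ∘ eS r s) = fun S => (Pi.basisFun ℝ (Finset (Fin (r + s)))) S := by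
    funext S
    rw [Function.comp_apply, Phi_eS, Pi.basisFun_apply]
  rw [this]
  exact (Pi.basisFun ℝ (Finset (Fin (r + s)))).linearIndependent

lemma eS_span : Submodule.span ℝ (Set.range (eS r s)) = ⊤ := by
  set W := Submodule.span ℝ (Set.range (eS r s)) with hW
  have hgen : ∀ (i : Fin (r + s)), ∀ x ∈ W, gen r s i * x ∈ W := by
    intro i x hx
    induction hx using Submodule.span_induction with
    | mem y hy =>
      obtain ⟨S, rfl⟩ := hy
      obtain ⟨c, -, hc⟩ := gen_mul_eS r s S i
      rw [hc]
      exact Submodule.smul_mem _ _ (Submodule.subset_span ⟨_, rfl⟩)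
    | zero => rw [mul_zero]; exact Submodule.zero_mem _
    | add y z _ _ hy hz => rw [mul_add]; exact Submodule.add_mem _ hy hz
    | smul c y _ hy => rw [mul_smul_comm]; exact Submodule.smul_mem _ _ hy
  have hι : ∀ (v : Fin (r + s) → ℝ), ∀ x ∈ W, ι (Qrs r s) v * x ∈ W := by
    intro v x hx
    have hv : (ι (Qrs r s)) v = ∑ i, v i • gen r s i := by
      have : v = ∑ i, v i • (Pi.single i 1 : Fin (r + s) → ℝ) := by
        funext k
        simp [Pi.single_apply]
      simp only [gen]
      conv_lhs => rw [this]
      rw [map_sum]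
      refine Finset.sum_congr rfl fun i _ => ?_
      rw [map_smul]
    rw [hv, Finset.sum_mul]
    refine Submodule.sum_mem _ fun i _ => ?_
    rw [smul_mul_assoc]
    exact Submodule.smul_mem _ _ (hgen i x hx)
  have hmul : ∀ x : CliffordAlgebra (Qrs r s), ∀ y ∈ W, x * y ∈ W := by
    intro x
    induction x using CliffordAlgebra.induction with
    | algebraMap c =>
      intro y hy
      rw [← Algebra.smul_def]
      exact Submodule.smul_mem _ _ hy
    | ι v => exact hι v
    | mul a b ha hb => intro y hy; rw [mul_assoc]; exact ha _ (hb y hy)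
    | add a b ha hb => intro y hy; rw [add_mul]; exact Submodule.add_mem _ (ha y hy) (hb y hy)
  rw [eq_top_iff]
  intro x _
  have h1 : eS r s ∅ ∈ W := Submodule.subset_span ⟨∅, rfl⟩
  have := hmul x _ h1
  rwa [eS_empty, mul_one] at this

noncomputable def basisCl : Module.Basis (Finset (Fin (r + s))) ℝ (CliffordAlgebra (Qrs r s)) :=
  Module.Basis.mk (eS_linearIndependent r s) (by rw [eS_span])

lemma basisCl_apply (S : Finset (Fin (r + s))) : basisCl r s S = eS r s S :=
  Module.Basis.mk_apply _ _ _


lemma eS_univ : eS r s Finset.univ = volumeElt r s := by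
  rw [volumeElt, List.ofFn_eq_map, eS, Fin.sort_univ]
  rfl

lemma list_smul_prod {A : Type*} [Ring A] [Algebra ℝ A] {ι : Type*}
    (c : ι → ℝ) (g : ι → A) (l : List ι) :
    (l.map (fun k => c k • g k)).prod = (l.map c).prod • (l.map g).prod := by
  induction l with
  | nil => simp
  | cons h t ih =>
    rw [List.map_cons, List.prod_cons, ih, List.map_cons, List.prod_cons,
      List.map_cons, List.prod_cons, smul_mul_assoc, mul_smul_comm, smul_smul]

lemma list_mul_eS (l : List (Fin (r + s))) (hl : l.Nodup) (T : Finset (Fin (r + s))) :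
    ∃ c : ℝ, c * c = 1 ∧
      (l.map (gen r s)).prod * eS r s T = c • eS r s (l.toFinset ∆ T) := by
  induction l with
  | nil =>
    refine ⟨1, by norm_num, ?_⟩
    have h0 : (∅ : Finset (Fin (r + s))) ∆ T = T := by
      rw [← Finset.bot_eq_empty, bot_symmDiff]
    simp [h0]
  | cons i l ih =>
    obtain ⟨hi, hnd⟩ := List.nodup_cons.mp hl
    obtain ⟨c, hc, hmul⟩ := ih hnd
    obtain ⟨c', hc', hmul'⟩ := gen_mul_eS r s (l.toFinset ∆ T) i
    refine ⟨c * c', by nlinarith, ?_⟩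
    rw [List.map_cons, List.prod_cons, mul_assoc, hmul, mul_smul_comm, hmul', smul_smul]
    congr 2
    rw [List.toFinset_cons, ← singleton_symmDiff_of_not_mem r s (by
        simpa using hi), symmDiff_assoc]

lemma volume_mul_volume :
    ∃ c : ℝ, c * c = 1 ∧ volumeElt r s * volumeElt r s = c • 1 := by
  obtain ⟨c, hc, hmul⟩ := list_mul_eS r s (Finset.univ.sort (· ≤ ·))
    (Finset.sort_nodup _ _) Finset.univ
  refine ⟨c, hc, ?_⟩
  rw [Finset.sort_toFinset, symmDiff_self, Finset.bot_eq_empty, eS_empty] at hmul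
  rw [← eS_univ, eS]
  exact hmul

/-! ### sign flip isometries -/

noncomputable def dvec (i j : Fin (r + s)) : Fin (r + s) → ℝ :=
  fun k => if k = i ∨ k = j then -1 else 1

lemma dvec_mul_self (i j k : Fin (r + s)) : dvec r s i j k * dvec r s i j k = 1 := by
  unfold dvec; split <;> norm_num

noncomputable def flipL (i j : Fin (r + s)) : (Fin (r + s) → ℝ) →ₗ[ℝ] (Fin (r + s) → ℝ) where
  toFun v := fun k => dvec r s i j k * v k
  map_add' u v := by funext k; simp [mul_add]
  map_smul' c v := by funext k; simp only [Pi.smul_apply, smul_eq_mul, RingHom.id_apply]; ring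

lemma flipL_invol (i j : Fin (r + s)) (v : Fin (r + s) → ℝ) :
    flipL r s i j (flipL r s i j v) = v := by
  funext k
  show dvec r s i j k * (dvec r s i j k * v k) = v k
  rw [← mul_assoc, dvec_mul_self, one_mul]

noncomputable def flipE (i j : Fin (r + s)) : (Fin (r + s) → ℝ) ≃ₗ[ℝ] (Fin (r + s) → ℝ) :=
  LinearEquiv.ofLinear (flipL r s i j) (flipL r s i j)
    (LinearMap.ext (flipL_invol r s i j)) (LinearMap.ext (flipL_invol r s i j))

noncomputable def flipIso (i j : Fin (r + s)) : (Qrs r s).IsometryEquiv (Qrs r s) :=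
  { flipE r s i j with
    map_app' := by
      intro v
      rw [Qrs_apply, Qrs_apply]
      refine Finset.sum_congr rfl fun k _ => ?_
      show wt r s k * ((dvec r s i j k * v k) * (dvec r s i j k * v k)) = wt r s k * (v k * v k)
      calc wt r s k * ((dvec r s i j k * v k) * (dvec r s i j k * v k))
          = (dvec r s i j k * dvec r s i j k) * (wt r s k * (v k * v k)) := by ring
        _ = wt r s k * (v k * v k) := by rw [dvec_mul_self, one_mul] }

lemma flip_special {i j : Fin (r + s)} (hij : i ≠ j) :
    LinearEquiv.det (flipIso r s i j).toLinearEquiv = 1 := by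
  apply Units.ext
  rw [LinearEquiv.coe_det]
  have h1 : ((flipIso r s i j).toLinearEquiv : (Fin (r + s) → ℝ) →ₗ[ℝ] (Fin (r + s) → ℝ))
      = Matrix.toLin' (Matrix.diagonal (dvec r s i j)) := by
    apply LinearMap.ext
    intro v
    funext k
    rw [Matrix.toLin'_apply, Matrix.mulVec_diagonal]
    rfl
  rw [h1, LinearMap.det_toLin', Matrix.det_diagonal]
  have h2 : ∀ k, dvec r s i j k = if k ∈ ({i, j} : Finset (Fin (r + s))) then (-1 : ℝ) else 1 := by
    intro k
    simp [dvec, Finset.mem_insert]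
  rw [Finset.prod_congr rfl (fun k _ => h2 k), Finset.prod_ite_mem, Finset.univ_inter,
    Finset.prod_const, Finset.card_pair hij]
  norm_num

lemma flip_gen (i j k : Fin (r + s)) :
    CliffordAlgebra.map (flipIso r s i j).toIsometry (gen r s k)
      = dvec r s i j k • gen r s k := by
  rw [gen, map_apply_ι, ← map_smul]
  congr 1
  funext m
  show dvec r s i j m * (Pi.single k 1 : Fin (r + s) → ℝ) m = (dvec r s i j k • (Pi.single k 1 : Fin (r+s) → ℝ)) m
  rw [Pi.smul_apply, Pi.single_apply, smul_eq_mul]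
  by_cases hm : m = k
  · subst hm; simp
  · simp [hm]

lemma flip_eS (i j : Fin (r + s)) (S : Finset (Fin (r + s))) :
    CliffordAlgebra.map (flipIso r s i j).toIsometry (eS r s S)
      = (∏ k ∈ S, dvec r s i j k) • eS r s S := by
  rw [eS, map_list_prod, List.map_map]
  have h1 : (List.map (⇑(CliffordAlgebra.map (flipIso r s i j).toIsometry) ∘ gen r s)
      (S.sort (· ≤ ·))) = List.map (fun k => dvec r s i j k • gen r s k) (S.sort (· ≤ ·)) :=
    List.map_congr_left fun k _ => flip_gen r s i j k
  rw [h1, list_smul_prod]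
  congr 1
  have h2 : List.Perm ((S.sort (· ≤ ·)).map (dvec r s i j)) ((S.toList).map (dvec r s i j)) :=
    (Finset.sort_perm_toList _ _).map _
  rw [h2.prod_eq, Finset.prod_map_toList]


lemma prod_dvec {i j : Fin (r + s)} {S : Finset (Fin (r + s))}
    (hi : i ∈ S) (hj : j ∉ S) : (∏ k ∈ S, dvec r s i j k) = -1 := by
  have h1 : ∀ k ∈ S, dvec r s i j k = if k = i then (-1 : ℝ) else 1 := by
    intro k hk
    have hkj : k ≠ j := fun hc => hj (hc ▸ hk)
    unfold dvec
    by_cases hki : k = i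
    · rw [if_pos (Or.inl hki), if_pos hki]
    · rw [if_neg (by tauto), if_neg hki]
  rw [Finset.prod_congr rfl h1, Finset.prod_ite_eq', if_pos hi]

end Hlp

/-- Any `SO(r,s)`-equivariant complex structure on `Cl(r,s)` forces `ω² = -1`
and is right multiplication by `±ω`. -/
theorem equivariant_complex_structure_eq_pm_volumeElt (r s : ℕ) (hrs : 1 ≤ r + s)
    (J : CliffordAlgebra (Qrs r s) →ₗ[ℝ] CliffordAlgebra (Qrs r s))
    (h1 : ∀ x, J (J x) = -x)
    (h2 : ∀ x y, J (x * y) = x * J y)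
    (h3 : ∀ f : (Qrs r s).IsometryEquiv (Qrs r s), IsSpecial f →
      ∀ x, J (CliffordAlgebra.map f.toIsometry x) =
        CliffordAlgebra.map f.toIsometry (J x)) :
    volumeElt r s ^ 2 = -1 ∧
    (J 1 = volumeElt r s ∨ J 1 = -volumeElt r s) := by
  classical
  set a := J 1 with ha
  set ω := volumeElt r s with hω
  set B := Hlp.basisCl r s with hB
  -- `a * a = -1`
  have haa : a * a = -1 := by
    have hJa : J a = a * a := by
      conv_lhs => rw [show a = a * 1 from (mul_one a).symm]
      rw [h2]
    have := h1 1
    rw [← ha, hJa] at this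
    exact this
  -- coefficients of `a` vanish away from `∅` and `univ`
  have hcoord : ∀ S : Finset (Fin (r + s)), S ≠ ∅ → S ≠ Finset.univ →
      B.repr a S = 0 := by
    intro S hne hnu
    obtain ⟨i, hi⟩ := Finset.nonempty_iff_ne_empty.mpr hne
    obtain ⟨j, hj⟩ : ∃ j, j ∉ S := by
      by_contra hcon
      push_neg at hcon
      exact hnu (Finset.eq_univ_iff_forall.mpr hcon)
    have hij : i ≠ j := fun hc => hj (hc ▸ hi)
    have hspec : IsSpecial (Hlp.flipIso r s i j) := Hlp.flip_special r s hij
    have hinv : a = CliffordAlgebra.map (Hlp.flipIso r s i j).toIsometry a := by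
      have := h3 _ hspec 1
      rwa [map_one, ← ha] at this
    have hkey : ∀ x, B.repr (CliffordAlgebra.map (Hlp.flipIso r s i j).toIsometry x) S
        = - B.repr x S := by
      have hLM : (Finsupp.lapply S).comp ((B.repr : CliffordAlgebra (Qrs r s) ≃ₗ[ℝ]
            (Finset (Fin (r + s)) →₀ ℝ)).toLinearMap.comp
            (CliffordAlgebra.map (Hlp.flipIso r s i j).toIsometry).toLinearMap)
          = -((Finsupp.lapply S).comp (B.repr :
              CliffordAlgebra (Qrs r s) ≃ₗ[ℝ] (Finset (Fin (r + s)) →₀ ℝ)).toLinearMap) := by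
        apply Module.Basis.ext B
        intro S'
        simp only [LinearMap.coe_comp, Function.comp_apply, LinearEquiv.coe_coe,
          AlgHom.toLinearMap_apply, LinearMap.neg_apply, Finsupp.lapply_apply]
        rw [hB, Hlp.basisCl_apply, Hlp.flip_eS, map_smul, ← Hlp.basisCl_apply r s S', ← hB,
          Module.Basis.repr_self, Finsupp.smul_single, smul_eq_mul, mul_one, Finsupp.single_apply]
        by_cases hSS : S' = S
        · subst hSS
          rw [if_pos rfl, Hlp.prod_dvec r s hi hj]
          rw [Finsupp.single_apply, if_pos rfl]
        · rw [if_neg hSS, Finsupp.single_apply, if_neg hSS]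
          simp
      intro x
      have := congrArg (fun (L : CliffordAlgebra (Qrs r s) →ₗ[ℝ] ℝ) => L x) hLM
      simpa using this
    have h0 := hkey a
    rw [← hinv] at h0
    linarith [h0]
  -- decompose `a`
  haveI : NeZero (r + s) := ⟨by omega⟩
  have hones : (∅ : Finset (Fin (r + s))) ≠ Finset.univ := by
    intro hc
    have : (⟨0, by omega⟩ : Fin (r + s)) ∈ (∅ : Finset (Fin (r + s))) :=
      hc ▸ Finset.mem_univ _
    simp at this
  set α := B.repr a ∅ with hα
  set β := B.repr a Finset.univ with hβ
  have hone : (1 : CliffordAlgebra (Qrs r s)) = B ∅ := by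
    rw [hB, Hlp.basisCl_apply, Hlp.eS_empty]
  have homB : ω = B Finset.univ := by
    rw [hB, Hlp.basisCl_apply, Hlp.eS_univ, hω]
  have hdecomp : a = α • (1 : CliffordAlgebra (Qrs r s)) + β • ω := by
    have hsum := B.sum_repr a
    rw [← hsum]
    rw [show (∑ S, B.repr a S • B S)
        = ∑ S ∈ ({∅, Finset.univ} : Finset (Finset (Fin (r + s)))), B.repr a S • B S from
      (Finset.sum_subset (Finset.subset_univ _) (fun S _ hS => by
        rw [hcoord S (fun hc => hS (by rw [hc]; exact Finset.mem_insert_self _ _))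
          (fun hc => hS (by rw [hc]; simp)), zero_smul])).symm]
    rw [Finset.sum_pair hones, hone, homB]
  -- extraction of coefficients
  have hextract : ∀ x y x' y' : ℝ,
      x • (1 : CliffordAlgebra (Qrs r s)) + y • ω = x' • 1 + y' • ω → x = x' ∧ y = y' := by
    intro x y x' y' h
    rw [hone, homB] at h
    have hE := congrArg (fun z => B.repr z ∅) h
    have hU := congrArg (fun z => B.repr z Finset.univ) h
    simp only [map_add, map_smul, Module.Basis.repr_self, Finsupp.coe_add, Finsupp.coe_smul,
      Pi.add_apply, Pi.smul_apply, Finsupp.single_apply, smul_eq_mul, eq_self_iff_true,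
      if_true, if_neg hones, if_neg (Ne.symm hones), mul_zero, mul_one, add_zero,
      zero_add] at hE hU
    exact ⟨hE, hU⟩
  obtain ⟨c, hc, hωω⟩ := Hlp.volume_mul_volume r s
  rw [← hω] at hωω
  -- expand a * a
  have e1 : (α • (1 : CliffordAlgebra (Qrs r s))) * (α • 1) = (α * α) • 1 := by
    rw [smul_mul_smul_comm, one_mul]
  have e2 : (α • (1 : CliffordAlgebra (Qrs r s))) * (β • ω) = (α * β) • ω := by
    rw [smul_mul_smul_comm, one_mul]
  have e3 : (β • ω) * (α • (1 : CliffordAlgebra (Qrs r s))) = (β * α) • ω := by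
    rw [smul_mul_smul_comm, mul_one]
  have e4 : (β • ω) * (β • ω) = ((β * β) * c) • (1 : CliffordAlgebra (Qrs r s)) := by
    rw [smul_mul_smul_comm, hωω, smul_smul]
  have hexp : a * a = (α * α + c * (β * β)) • (1 : CliffordAlgebra (Qrs r s))
      + (α * β + β * α) • ω := by
    calc a * a = (α • 1 + β • ω) * (α • 1 + β • ω) := by rw [← hdecomp]
      _ = (α • (1:CliffordAlgebra (Qrs r s))) * (α • 1) + (α • 1) * (β • ω)
          + ((β • ω) * (α • 1) + (β • ω) * (β • ω)) := by
            rw [add_mul, mul_add, mul_add]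
      _ = (α * α) • 1 + (α * β) • ω + ((β * α) • ω + ((β * β) * c) • 1) := by
            rw [e1, e2, e3, e4]
      _ = (α * α + c * (β * β)) • (1 : CliffordAlgebra (Qrs r s))
          + (α * β + β * α) • ω := by
            rw [add_smul, add_smul]
            rw [show c * (β * β) = (β * β) * c from mul_comm _ _]
            abel
  have hm1 : (-1 : CliffordAlgebra (Qrs r s)) = (-1 : ℝ) • 1 + (0 : ℝ) • ω := by
    rw [neg_smul, one_smul, zero_smul, add_zero]
  have heq : (α * α + c * (β * β)) • (1 : CliffordAlgebra (Qrs r s)) + (α * β + β * α) • ω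
      = (-1 : ℝ) • 1 + (0 : ℝ) • ω := by
    rw [← hexp, haa, hm1]
  obtain ⟨hA, hBB⟩ := hextract _ _ _ _ heq
  have hcneg : c = -1 := by
    rcases mul_self_eq_one_iff.mp hc with h | h
    · exfalso
      rw [h, one_mul] at hA
      nlinarith
    · exact h
  constructor
  · rw [sq, hωω, hcneg, neg_smul, one_smul]
  · have hab : α * β = 0 := by
      rw [mul_comm β α] at hBB
      linarith
    rcases mul_eq_zero.mp hab with hA0 | hB0
    · have hββ : β * β = 1 := by
        rw [hcneg, hA0] at hA
        nlinarith
      rcases mul_self_eq_one_iff.mp hββ with hb | hb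
      · left
        rw [hdecomp, hA0, hb, zero_smul, one_smul, zero_add]
      · right
        rw [hdecomp, hA0, hb, zero_smul, zero_add, neg_smul, one_smul]
    · exfalso
      rw [hB0] at hA
      nlinarith
end

section
/- Let r, s be natural numbers with r + s ≥ 1. There exists an ℝ-linear map J : Cl(r,s) → Cl(r,s) satisfying (i) J ∘ J = -id, (ii) J(x*y) = x * J(y) for all x, y ∈ Cl(r,s), and (iii) J(map f x) = map f (J x) for every special isometry equivalence f of Q_{r,s}, if and only if either (1) s is odd and r + s ≡ 0 or 3 (mod 4), or (2) s is even and r + s ≡ 1 or 2 (mod 4). -/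
open CliffordAlgebra

section Aux

variable {M : Type*} [AddCommGroup M] [Module ℝ M] {Q Q' : QuadraticForm ℝ M}

lemma aux_mul_prod {A : Type*} [Ring A] (x : A) :
    ∀ (l : List A), (∀ y ∈ l, x * y = -(y * x)) →
      x * l.prod = (-1 : ℤ) ^ l.length • (l.prod * x)
  | [], _ => by simp
  | y :: t, h => by
    have hy := h y (by simp)
    have ht := aux_mul_prod x t (fun z hz => h z (by simp [hz]))
    simp only [List.prod_cons, List.length_cons, pow_succ]
    rw [← mul_assoc, hy, neg_mul, mul_assoc, ht]
    simp only [mul_smul_comm, ← mul_assoc]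
    rw [← neg_smul, mul_neg_one]

lemma ι_anticomm (a b : M) (h : QuadraticMap.polar (⇑Q) a b = 0) :
    ι Q a * ι Q b = -(ι Q b * ι Q a) := by
  have := CliffordAlgebra.ι_mul_ι_add_swap (Q := Q) a b
  rw [h, map_zero] at this
  exact eq_neg_of_add_eq_zero_left this

/-- square of a product of pairwise-orthogonal vectors -/
lemma prod_ι_sq : ∀ (l : List M), l.Pairwise (fun a b => QuadraticMap.polar (⇑Q) a b = 0) →
    (l.map (ι Q)).prod * (l.map (ι Q)).prod
      = algebraMap ℝ _ ((-1) ^ (l.length.choose 2) * (l.map (⇑Q)).prod)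
  | [], _ => by simp
  | m :: t, h => by
    obtain ⟨hm, ht⟩ := List.pairwise_cons.mp h
    set P := (t.map (ι Q)).prod with hP
    have key : ι Q m * P = (-1 : ℤ) ^ t.length • (P * ι Q m) := by
      have := aux_mul_prod (ι Q m) (t.map (ι Q)) ?_
      · simpa using this
      · intro y hy
        obtain ⟨v, hv, rfl⟩ := List.mem_map.mp hy
        exact ι_anticomm m v (hm v hv)
    have ih := prod_ι_sq t ht
    simp only [List.map_cons, List.prod_cons, List.length_cons]
    have assoc : ι Q m * P * (ι Q m * P) = ι Q m * (P * ι Q m) * P := by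
      simp [mul_assoc]
    have key2 : P * ι Q m = (-1 : ℤ) ^ t.length • (ι Q m * P) := by
      rw [key, smul_smul, ← pow_add, Even.neg_one_pow ⟨t.length, rfl⟩, one_smul]
    rw [assoc, key2, mul_smul_comm, smul_mul_assoc, ← mul_assoc, ι_sq_scalar, mul_assoc,
      hP, ih, ← map_mul, ← map_zsmul (algebraMap ℝ (CliffordAlgebra Q)),
      Nat.choose_succ_succ, Nat.choose_one_right]
    congr 1
    rw [zsmul_eq_mul]
    push_cast
    ring

lemma contract_prod_eq_zero (d : Module.Dual ℝ M) :
    ∀ (l : List M), (∀ v ∈ l, d v = 0) →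
      contractLeft (Q := Q) d (l.map (ι Q)).prod = 0
  | [], _ => by simp [CliffordAlgebra.contractLeft_one]
  | m :: t, h => by
    simp only [List.map_cons, List.prod_cons]
    rw [CliffordAlgebra.contractLeft_ι_mul, h m (by simp),
      contract_prod_eq_zero d t (fun v hv => h v (by simp [hv]))]
    simp

lemma changeForm_orthogonal_prod {B : LinearMap.BilinForm ℝ M}
    (h : B.toQuadraticMap = Q' - Q) :
    ∀ (l : List M), l.Pairwise (fun a b => B a b = 0) →
      changeForm h ((l.map (ι Q)).prod) = (l.map (ι Q')).prod
  | [], _ => by simp [CliffordAlgebra.changeForm_one]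
  | m :: t, hl => by
    obtain ⟨hm, ht⟩ := List.pairwise_cons.mp hl
    simp only [List.map_cons, List.prod_cons]
    rw [CliffordAlgebra.changeForm_ι_mul, changeForm_orthogonal_prod h t ht,
      contract_prod_eq_zero (B m) t (fun v hv => hm v hv)]
    simp

lemma equivExterior_orthogonal_prod (l : List M)
    (hl : l.Pairwise (fun a b => QuadraticMap.polar (⇑Q) a b = 0)) :
    equivExterior Q ((l.map (ι Q)).prod) = (l.map (ExteriorAlgebra.ι ℝ)).prod := by
  have hB : ∀ a b : M, QuadraticMap.polar (⇑Q) a b = 0 →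
      (QuadraticMap.associated (R := ℝ) (-Q)) a b = 0 := by
    intro a b hab
    rw [QuadraticMap.associated_apply]
    simp only [QuadraticMap.neg_apply]
    have h2 : Q (a + b) - Q a - Q b = 0 := by
      simpa [QuadraticMap.polar] using hab
    rw [show -Q (a + b) - -Q a - -Q b = -(Q (a + b) - Q a - Q b) by ring, h2]
    simp
  show changeForm changeForm.associated_neg_proof ((l.map (ι Q)).prod) = _
  have : (ExteriorAlgebra.ι ℝ : M →ₗ[ℝ] ExteriorAlgebra ℝ M)
      = CliffordAlgebra.ι (0 : QuadraticForm ℝ M) := rfl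
  rw [this]
  exact changeForm_orthogonal_prod _ l (hl.imp (fun {a b} hab => hB a b hab))

set_option synthInstance.maxHeartbeats 1000000 in
lemma iotaMulti_comp_det {n : ℕ} (f : (Fin n → ℝ) →ₗ[ℝ] (Fin n → ℝ)) :
    ExteriorAlgebra.ιMulti ℝ n (fun i => f (Pi.single i 1))
      = LinearMap.det f • ExteriorAlgebra.ιMulti ℝ n (fun i => Pi.single i 1) := by
  set b := Pi.basisFun ℝ (Fin n) with hb
  have hbe : ∀ i, b i = Pi.single i 1 := fun i => Pi.basisFun_apply ℝ (Fin n) i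
  rw [← sub_eq_zero, ← (Module.forall_dual_apply_eq_zero_iff ℝ _)]
  intro φ
  have key := AlternatingMap.eq_smul_basis_det b (φ.compAlternatingMap (ExteriorAlgebra.ιMulti ℝ n))
  have h1 := congrFun (congrArg (fun (g : (Fin n → ℝ) [⋀^Fin n]→ₗ[ℝ] ℝ) => g.toFun)
    key) (fun i => f (Pi.single i 1))
  have h2 : b.det (fun i => f (Pi.single i 1)) = LinearMap.det f := by
    have : (fun i => f (Pi.single i 1)) = ⇑f ∘ ⇑b := by
      funext i; simp [hbe]
    rw [this, Module.Basis.det_comp_basis, Module.Basis.equiv_refl]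
    simp
  simp only [AlternatingMap.coe_mk, LinearMap.compAlternatingMap_apply,
    AlternatingMap.smul_apply, smul_eq_mul] at h1 ⊢
  have h1' : φ (ExteriorAlgebra.ιMulti ℝ n fun i => f (Pi.single i 1))
      = φ (ExteriorAlgebra.ιMulti ℝ n ⇑b) * b.det (fun i => f (Pi.single i 1)) := by
    simpa [mul_comm] using h1
  rw [map_sub, map_smul, h1', h2]
  have : (fun i : Fin n => Pi.single i 1) = ⇑b := by funext i; simp [hbe]
  rw [this]
  ring_nf

lemma map_prod_ι {g : Q →qᵢ Q'} (l : List M) :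
    CliffordAlgebra.map g ((l.map (ι Q)).prod) = ((l.map ⇑g).map (ι Q')).prod := by
  rw [map_list_prod, List.map_map, List.map_map]
  refine congrArg List.prod (List.map_congr_left fun v _ => ?_)
  exact CliffordAlgebra.map_apply_ι g v

lemma Qrs_apply_single (r s : ℕ) (i : Fin (r + s)) :
    Qrs r s (Pi.single i 1) = if (i : ℕ) < r then -1 else 1 := by
  rw [Qrs, QuadraticMap.weightedSumSquares_apply]
  rw [Finset.sum_eq_single i]
  · simp [Pi.single_apply]
  · intro k _ hk
    simp [Pi.single_apply, hk]
  · simp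

lemma Qrs_polar_single (r s : ℕ) {i j : Fin (r + s)} (hij : i ≠ j) :
    QuadraticMap.polar (⇑(Qrs r s)) (Pi.single i 1) (Pi.single j 1) = 0 := by
  rw [QuadraticMap.polar, Qrs]
  simp only [QuadraticMap.weightedSumSquares_apply, ← Finset.sum_sub_distrib]
  refine Finset.sum_eq_zero fun k _ => ?_
  by_cases hki : k = i <;> by_cases hkj : k = j <;>
    simp_all [Pi.single_apply] <;> ring

lemma pairwise_polar_single (r s : ℕ) :
    (((List.finRange (r + s)).map (fun i => (Pi.single i 1 : Fin (r + s) → ℝ)))).Pairwise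
      (fun a b => QuadraticMap.polar (⇑(Qrs r s)) a b = 0) := by
  rw [List.pairwise_map]
  exact (List.pairwise_lt_finRange (r + s)).imp
    (fun h => Qrs_polar_single r s (ne_of_lt h))

lemma volumeElt_eq (r s : ℕ) :
    volumeElt r s = (((List.finRange (r + s)).map
      (fun i => (Pi.single i 1 : Fin (r + s) → ℝ))).map (ι (Qrs r s))).prod := by
  rw [volumeElt, List.ofFn_eq_map, List.map_map]
  rfl

set_option synthInstance.maxHeartbeats 1000000 in
lemma map_volumeElt (r s : ℕ) (f : (Qrs r s).IsometryEquiv (Qrs r s)) :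
    CliffordAlgebra.map f.toIsometry (volumeElt r s)
      = (LinearMap.det (f.toLinearEquiv : (Fin (r+s) → ℝ) →ₗ[ℝ] (Fin (r+s) → ℝ)))
          • volumeElt r s := by
  set l : List (Fin (r + s) → ℝ) :=
    (List.finRange (r + s)).map (fun i => (Pi.single i 1 : Fin (r + s) → ℝ)) with hl
  have hωl : volumeElt r s = (l.map (ι (Qrs r s))).prod := volumeElt_eq r s
  have hmap : CliffordAlgebra.map f.toIsometry (volumeElt r s)
      = ((l.map ⇑f).map (ι (Qrs r s))).prod := by
    rw [hωl]; exact map_prod_ι l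
  have hpol : ∀ a b : Fin (r+s) → ℝ, QuadraticMap.polar (⇑(Qrs r s)) (f a) (f b)
      = QuadraticMap.polar (⇑(Qrs r s)) a b := by
    intro a b
    simp only [QuadraticMap.polar, ← map_add]
    rw [f.map_app, f.map_app, f.map_app]
  apply (equivExterior (Qrs r s)).injective
  rw [hmap, map_smul, hωl,
    equivExterior_orthogonal_prod _ (by
      rw [List.pairwise_map]
      exact ((pairwise_polar_single r s).imp (fun {a b} h => by rw [hpol a b]; exact h))),
    equivExterior_orthogonal_prod _ (pairwise_polar_single r s)]
  have h1 : ((l.map ⇑f).map (ExteriorAlgebra.ι ℝ)).prod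
      = ExteriorAlgebra.ιMulti ℝ (r+s) (fun i => f (Pi.single i 1)) := by
    rw [ExteriorAlgebra.ιMulti_apply, List.ofFn_eq_map, hl, List.map_map, List.map_map]
    rfl
  have h2 : (l.map (ExteriorAlgebra.ι ℝ)).prod
      = ExteriorAlgebra.ιMulti ℝ (r+s) (fun i => (Pi.single i 1 : Fin (r+s) → ℝ)) := by
    rw [ExteriorAlgebra.ιMulti_apply, List.ofFn_eq_map, hl, List.map_map]
    rfl
  rw [h1, h2]
  exact iotaMulti_comp_det (f.toLinearEquiv : (Fin (r+s) → ℝ) →ₗ[ℝ] (Fin (r+s) → ℝ))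

lemma card_filter_lt (n r : ℕ) (hrn : r ≤ n) :
    (Finset.univ.filter (fun i : Fin n => (i : ℕ) < r)).card = r := by
  have : (Finset.univ.filter (fun i : Fin n => (i : ℕ) < r))
      = Finset.map ⟨fun k : Fin r => (⟨(k : ℕ), by omega⟩ : Fin n),
          fun a b hab => by simpa [Fin.ext_iff] using hab⟩ Finset.univ := by
    ext i
    simp only [Finset.mem_filter, Finset.mem_univ, true_and, Finset.mem_map,
      Function.Embedding.coeFn_mk]
    constructor
    · intro hi; exact ⟨⟨(i : ℕ), hi⟩, rfl⟩
    · rintro ⟨k, rfl⟩; exact k.2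
  rw [this, Finset.card_map, Finset.card_univ, Fintype.card_fin]

lemma volumeElt_sq (r s : ℕ) :
    volumeElt r s * volumeElt r s
      = algebraMap ℝ _ ((-1 : ℝ) ^ ((r+s).choose 2 + r)) := by
  rw [volumeElt_eq]
  rw [prod_ι_sq _ (pairwise_polar_single r s)]
  congr 1
  rw [List.length_map, List.length_finRange, List.map_map]
  have : ((List.finRange (r+s)).map (⇑(Qrs r s) ∘ fun i => (Pi.single i 1 : Fin (r+s) → ℝ))).prod
      = ∏ i : Fin (r+s), (if (i : ℕ) < r then (-1 : ℝ) else 1) := by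
    rw [← List.ofFn_eq_map, List.prod_ofFn]
    refine Finset.prod_congr rfl fun i _ => ?_
    exact Qrs_apply_single r s i
  rw [this, Finset.prod_ite, Finset.prod_const, Finset.prod_const, one_pow, mul_one,
    card_filter_lt (r+s) r (by omega), pow_add]

lemma choose_two_mod (n : ℕ) : n.choose 2 % 2 = if n % 4 = 0 ∨ n % 4 = 1 then 0 else 1 := by
  induction n with
  | zero => simp
  | succ n ih =>
    have h : (n+1).choose 2 = n.choose 2 + n := by
      rw [Nat.choose_succ_succ, Nat.choose_one_right, Nat.add_comm]
    rw [h]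
    split_ifs at ih ⊢ <;> omega

lemma parity_iff (r s : ℕ) : Odd ((r+s).choose 2 + r) ↔
    ((Odd s ∧ ((r + s) % 4 = 0 ∨ (r + s) % 4 = 3)) ∨
     (Even s ∧ ((r + s) % 4 = 1 ∨ (r + s) % 4 = 2))) := by
  have key := choose_two_mod (r+s)
  rw [Nat.odd_iff, Nat.odd_iff, Nat.even_iff]
  split_ifs at key <;> omega

section Flip
variable {r s : ℕ}

/-- the linear map multiplying coordinates by signs -/
noncomputable def flipMap (σ : Fin (r+s) → ℝ) : (Fin (r+s) → ℝ) →ₗ[ℝ] (Fin (r+s) → ℝ) :=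
  LinearMap.pi (fun k => σ k • LinearMap.proj k)

lemma flipMap_apply (σ : Fin (r+s) → ℝ) (x : Fin (r+s) → ℝ) (k : Fin (r+s)) :
    flipMap σ x k = σ k * x k := rfl

noncomputable def flipEquiv (σ : Fin (r+s) → ℝ) (hσ : ∀ k, σ k * σ k = 1) :
    (Qrs r s).IsometryEquiv (Qrs r s) where
  toLinearEquiv := LinearEquiv.ofInvolutive (flipMap σ) (fun x => by
    funext k
    rw [flipMap_apply, flipMap_apply, ← mul_assoc, hσ k, one_mul])
  map_app' := fun x => by
    rw [Qrs, QuadraticMap.weightedSumSquares_apply, QuadraticMap.weightedSumSquares_apply]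
    refine Finset.sum_congr rfl fun k _ => ?_
    have : flipMap σ x k * flipMap σ x k = x k * x k := by
      rw [flipMap_apply]
      have := hσ k
      ring_nf
      nlinarith [hσ k]
    exact congrArg (fun t : ℝ => (if (k : ℕ) < r then (-1:ℝ) else 1) • t) this

lemma flipEquiv_apply (σ : Fin (r+s) → ℝ) (hσ : ∀ k, σ k * σ k = 1) (x : Fin (r+s) → ℝ) :
    flipEquiv σ hσ x = flipMap σ x := rfl

lemma flipEquiv_special (σ : Fin (r+s) → ℝ) (hσ : ∀ k, σ k * σ k = 1)
    (hprod : ∏ k, σ k = 1) : IsSpecial (flipEquiv σ hσ) := by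
  rw [IsSpecial]
  have hM : flipMap (r := r) (s := s) σ = Matrix.toLin' (Matrix.diagonal σ) := by
    apply LinearMap.ext fun x => ?_
    funext k
    rw [flipMap_apply, Matrix.toLin'_apply, Matrix.mulVec_diagonal]
  apply Units.ext
  rw [LinearEquiv.coe_det]
  have h0 : ((flipEquiv σ hσ).toLinearEquiv : (Fin (r+s) → ℝ) →ₗ[ℝ] _) = flipMap σ := rfl
  rw [h0, hM, LinearMap.det_toLin', Matrix.det_diagonal, hprod]
  rfl
end Flip

section Words
variable (r s : ℕ)

/-- the product of generators indexed by a list -/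
noncomputable def wrd (l : List (Fin (r+s))) : CliffordAlgebra (Qrs r s) :=
  (l.map (fun i => ι (Qrs r s) (Pi.single i 1))).prod

@[simp] lemma wrd_nil : wrd r s [] = 1 := rfl

@[simp] lemma wrd_cons (i : Fin (r+s)) (l : List (Fin (r+s))) :
    wrd r s (i :: l) = ι (Qrs r s) (Pi.single i 1) * wrd r s l := by
  rw [wrd, List.map_cons, List.prod_cons]; rfl

lemma wrd_append (l l' : List (Fin (r+s))) :
    wrd r s (l ++ l') = wrd r s l * wrd r s l' := by
  rw [wrd, wrd, wrd, List.map_append, List.prod_append]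

lemma volumeElt_eq_wrd : volumeElt r s = wrd r s (List.finRange (r+s)) := by
  rw [volumeElt, List.ofFn_eq_map, wrd]

lemma prod_map_smul {α : Type*} {A : Type*} [Ring A] [Algebra ℝ A] (c : α → ℝ) (x : α → A) :
    ∀ l : List α, (l.map (fun i => c i • x i)).prod = (l.map c).prod • (l.map x).prod
  | [] => by simp
  | a :: t => by
    simp only [List.map_cons, List.prod_cons, prod_map_smul c x t,
      smul_mul_assoc, mul_smul_comm, smul_smul]
    rw [mul_comm]

lemma map_flip_wrd (σ : Fin (r+s) → ℝ) (hσ : ∀ k, σ k * σ k = 1) (l : List (Fin (r+s))) :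
    CliffordAlgebra.map (flipEquiv σ hσ).toIsometry (wrd r s l)
      = (l.map σ).prod • wrd r s l := by
  have h1 : wrd r s l
      = ((l.map (fun i => (Pi.single i 1 : Fin (r+s) → ℝ))).map (ι (Qrs r s))).prod := by
    rw [wrd, List.map_map]; rfl
  rw [h1, map_prod_ι, List.map_map]
  have h2 : ∀ i : Fin (r+s), (flipEquiv σ hσ) (Pi.single i 1)
      = σ i • (Pi.single i 1 : Fin (r+s) → ℝ) := by
    intro i
    funext k
    rw [flipEquiv_apply, flipMap_apply]
    rcases eq_or_ne k i with rfl | h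
    · simp
    · simp [Pi.single_apply, h]
  have h3 : ((l.map (fun i => (Pi.single i 1 : Fin (r+s) → ℝ))).map
        ⇑(flipEquiv σ hσ).toIsometry)
      = l.map (fun i => σ i • (Pi.single i 1 : Fin (r+s) → ℝ)) := by
    rw [List.map_map]
    exact List.map_congr_left fun i _ => h2 i
  rw [← List.map_map, h3]
  have h4 : (l.map (fun i => σ i • (Pi.single i 1 : Fin (r+s) → ℝ))).map (ι (Qrs r s))
      = l.map (fun i => σ i • ι (Qrs r s) (Pi.single i 1)) := by
    rw [List.map_map]
    exact List.map_congr_left fun i _ => by simp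
  rw [h4, prod_map_smul, List.map_map]
  rfl

end Words

section Normalize
variable (r s : ℕ)

lemma insert_wrd (i : Fin (r+s)) :
    ∀ (t : List (Fin (r+s))), t.Pairwise (· < ·) →
    ∃ (c : ℝ) (u : List (Fin (r+s))), u.Pairwise (· < ·) ∧
      (∀ k, k ∈ u ↔ ((k ∈ t ∧ k ≠ i) ∨ (k ∉ t ∧ k = i))) ∧
      ι (Qrs r s) (Pi.single i 1) * wrd r s t = c • wrd r s u
  | [], _ => by
    refine ⟨1, [i], List.pairwise_singleton _ i, fun k => ?_, by simp⟩
    simp [eq_comm]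
  | j :: t', ht => by
    obtain ⟨hj, ht'⟩ := List.pairwise_cons.mp ht
    rcases lt_trichotomy i j with hij | rfl | hij
    · refine ⟨1, i :: j :: t', ?_, fun k => ?_, by simp⟩
      · exact List.pairwise_cons.mpr ⟨fun b hb => by
          rcases List.mem_cons.mp hb with rfl | hb
          · exact hij
          · exact hij.trans (hj b hb), ht⟩
      · have hni : i ∉ j :: t' := fun hmem => by
          rcases List.mem_cons.mp hmem with rfl | hmem
          · exact lt_irrefl i hij
          · exact lt_irrefl i (hij.trans (hj i hmem))
        constructor
        · intro hk
          rcases List.mem_cons.mp hk with rfl | hk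
          · exact Or.inr ⟨hni, rfl⟩
          · exact Or.inl ⟨hk, fun hki => hni (hki ▸ hk)⟩
        · rintro (⟨hk, _⟩ | ⟨_, rfl⟩)
          · exact List.mem_cons_of_mem _ hk
          · exact List.mem_cons_self
    · have hni : i ∉ t' := fun hmem => lt_irrefl i (hj i hmem)
      refine ⟨Qrs r s (Pi.single i 1), t', ht', fun k => ?_, ?_⟩
      · constructor
        · intro hk
          exact Or.inl ⟨List.mem_cons_of_mem _ hk, fun hki => hni (hki ▸ hk)⟩
        · rintro (⟨hk, hki⟩ | ⟨hk, rfl⟩)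
          · rcases List.mem_cons.mp hk with rfl | hk
            · exact absurd rfl hki
            · exact hk
          · exact absurd (List.mem_cons_self) hk
      · rw [wrd_cons, ← mul_assoc, CliffordAlgebra.ι_sq_scalar, Algebra.smul_def]
    · obtain ⟨c', u', hu's, hu'm, hu'e⟩ := insert_wrd i t' ht'
      have hji : j ≠ i := ne_of_lt hij
      refine ⟨-c', j :: u', ?_, fun k => ?_, ?_⟩
      · refine List.pairwise_cons.mpr ⟨fun b hb => ?_, hu's⟩
        rcases (hu'm b).mp hb with ⟨hbt, _⟩ | ⟨_, rfl⟩
        · exact hj b hbt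
        · exact hij
      · have hju' : j ∉ u' := fun hmem => by
          rcases (hu'm j).mp hmem with ⟨hbt, _⟩ | ⟨_, rfl⟩
          · exact lt_irrefl j (hj j hbt)
          · exact hji rfl
        constructor
        · intro hk
          rcases List.mem_cons.mp hk with rfl | hk
          · exact Or.inl ⟨List.mem_cons_self, hji⟩
          · rcases (hu'm k).mp hk with ⟨hkt, hki⟩ | ⟨hkt, rfl⟩
            · exact Or.inl ⟨List.mem_cons_of_mem _ hkt, hki⟩
            · exact Or.inr ⟨fun hmem => by
                rcases List.mem_cons.mp hmem with rfl | hmem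
                · exact hji rfl
                · exact hkt hmem, rfl⟩
        · rintro (⟨hk, hki⟩ | ⟨hk, rfl⟩)
          · rcases List.mem_cons.mp hk with rfl | hk
            · exact List.mem_cons_self
            · exact List.mem_cons_of_mem _ ((hu'm k).mpr (Or.inl ⟨hk, hki⟩))
          · exact List.mem_cons_of_mem _ ((hu'm k).mpr
              (Or.inr ⟨fun hk' => hk (List.mem_cons_of_mem _ hk'), rfl⟩))
      · have hanti : ι (Qrs r s) (Pi.single i 1) * ι (Qrs r s) (Pi.single j 1)
            = -(ι (Qrs r s) (Pi.single j 1) * ι (Qrs r s) (Pi.single i 1)) :=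
          ι_anticomm _ _ (Qrs_polar_single r s hji.symm)
        rw [wrd_cons, ← mul_assoc, hanti, neg_mul, mul_assoc, hu'e, wrd_cons]
        rw [mul_smul_comm, neg_smul, ← neg_smul]

lemma normalize_wrd : ∀ l : List (Fin (r+s)),
    ∃ (c : ℝ) (u : List (Fin (r+s))), u.Pairwise (· < ·) ∧
      (∀ k, k ∈ u ↔ Odd (l.count k)) ∧ wrd r s l = c • wrd r s u
  | [] => ⟨1, [], List.Pairwise.nil, by simp, by simp⟩
  | i :: t => by
    obtain ⟨c, u, hus, hum, hue⟩ := normalize_wrd t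
    obtain ⟨c₂, u₂, hu₂s, hu₂m, hu₂e⟩ := insert_wrd r s i u hus
    refine ⟨c * c₂, u₂, hu₂s, fun k => ?_, ?_⟩
    · rw [hu₂m k]
      rcases eq_or_ne k i with rfl | hki
      · simp only [List.count_cons_self, hum k, Nat.odd_iff]
        simp only [ne_eq]
        constructor
        · rintro (⟨_, h⟩ | ⟨h, _⟩)
          · exact absurd trivial h
          · omega
        · intro h
          exact Or.inr ⟨by omega, trivial⟩
      · rw [List.count_cons_of_ne hki.symm, hum k]
        constructor
        · rintro (⟨h, _⟩ | ⟨_, h⟩)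
          · exact h
          · exact absurd h hki
        · intro h; exact Or.inl ⟨h, hki⟩
    · rw [wrd_cons, hue, mul_smul_comm, hu₂e, smul_smul]

end Normalize

section SortedFull
lemma sorted_full_eq_finRange {n : ℕ} (u : List (Fin n)) (hs : u.Pairwise (· < ·))
    (hm : ∀ k, k ∈ u) : u = List.finRange n := by
  haveI : Std.Antisymm (α := Fin n) (· < ·) := ⟨fun a b h1 h2 => absurd h1 (asymm h2)⟩
  have hnd : u.Nodup := hs.imp (fun h => ne_of_lt h)
  have hperm : List.Perm u (List.finRange n) := by
    rw [List.perm_ext_iff_of_nodup hnd (List.nodup_finRange n)]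
    intro k
    simp [hm k, List.mem_finRange]
  exact List.Perm.eq_of_pairwise' hs
    ((List.pairwise_lt_finRange n)) hperm
end SortedFull

section Span
variable (r s : ℕ)

lemma mul_mem_span_wrd {a b : CliffordAlgebra (Qrs r s)}
    (ha : a ∈ Submodule.span ℝ (Set.range (wrd r s)))
    (hb : b ∈ Submodule.span ℝ (Set.range (wrd r s))) :
    a * b ∈ Submodule.span ℝ (Set.range (wrd r s)) := by
  induction ha using Submodule.span_induction with
  | mem x hx =>
    obtain ⟨l, rfl⟩ := hx
    induction hb using Submodule.span_induction with
    | mem y hy =>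
      obtain ⟨l', rfl⟩ := hy
      exact Submodule.subset_span ⟨l ++ l', wrd_append r s l l'⟩
    | zero => simp
    | add y z _ _ hy hz => rw [mul_add]; exact Submodule.add_mem _ hy hz
    | smul c y _ hy => rw [mul_smul_comm]; exact Submodule.smul_mem _ c hy
  | zero => simp
  | add y z _ _ hy hz => rw [add_mul]; exact Submodule.add_mem _ hy hz
  | smul c y _ hy => rw [smul_mul_assoc]; exact Submodule.smul_mem _ c hy

lemma mem_span_wrd (x : CliffordAlgebra (Qrs r s)) :
    x ∈ Submodule.span ℝ (Set.range (wrd r s)) := by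
  induction x using CliffordAlgebra.induction with
  | algebraMap c =>
    rw [Algebra.algebraMap_eq_smul_one]
    exact Submodule.smul_mem _ c (Submodule.subset_span ⟨[], rfl⟩)
  | ι v =>
    have hv : v = ∑ i, v i • (Pi.single i 1 : Fin (r+s) → ℝ) := by
      funext k
      rw [Finset.sum_apply]
      rw [Finset.sum_eq_single k]
      · simp
      · intro b _ hb; simp [Pi.single_apply, Ne.symm hb]
      · simp
    rw [hv, map_sum]
    refine Submodule.sum_mem _ fun i _ => ?_
    rw [map_smul]
    refine Submodule.smul_mem _ _ (Submodule.subset_span ⟨[i], ?_⟩)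
    simp [wrd]
  | mul a b ha hb => exact mul_mem_span_wrd r s ha hb
  | add a b ha hb => exact Submodule.add_mem _ ha hb

end Span

section Proj
variable (r s : ℕ)

noncomputable def sigmaP (p : Fin (r+s) × Fin (r+s)) : Fin (r+s) → ℝ :=
  fun k => if k = p.1 ∨ k = p.2 then -1 else 1

lemma sigmaP_sq (p : Fin (r+s) × Fin (r+s)) (k : Fin (r+s)) :
    sigmaP r s p k * sigmaP r s p k = 1 := by
  simp only [sigmaP]; split_ifs <;> norm_num

lemma sigmaP_prod_count (p : Fin (r+s) × Fin (r+s)) (hij : p.1 ≠ p.2) :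
    ∀ l : List (Fin (r+s)),
      (l.map (sigmaP r s p)).prod = (-1 : ℝ) ^ (l.count p.1 + l.count p.2)
  | [] => by simp
  | a :: t => by
    have ih := sigmaP_prod_count p hij t
    rcases eq_or_ne a p.1 with rfl | ha
    · rw [List.map_cons, List.prod_cons, ih, List.count_cons_self,
        List.count_cons_of_ne hij]
      rw [show sigmaP r s p p.1 = -1 from by simp [sigmaP]]
      rw [pow_add, pow_add, pow_succ]
      ring
    · rcases eq_or_ne a p.2 with rfl | hb
      · rw [List.map_cons, List.prod_cons, ih, List.count_cons_self,
          List.count_cons_of_ne (Ne.symm hij)]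
        rw [show sigmaP r s p p.2 = -1 from by simp [sigmaP]]
        rw [pow_add, pow_add, pow_succ]
        ring
      · rw [List.map_cons, List.prod_cons, ih, List.count_cons_of_ne ha,
          List.count_cons_of_ne hb]
        rw [show sigmaP r s p a = 1 from by simp [sigmaP, ha, hb]]
        ring

noncomputable def flipP (p : Fin (r+s) × Fin (r+s)) : (Qrs r s).IsometryEquiv (Qrs r s) :=
  flipEquiv (sigmaP r s p) (sigmaP_sq r s p)

lemma flipP_special (p : Fin (r+s) × Fin (r+s)) (hij : p.1 ≠ p.2) :
    IsSpecial (flipP r s p) := by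
  refine flipEquiv_special _ _ ?_
  have hfil : Finset.univ.filter (fun k => k = p.1 ∨ k = p.2) = {p.1, p.2} := by
    ext k; simp [Finset.mem_insert]
  rw [show (fun k => sigmaP r s p k) = sigmaP r s p from rfl]
  unfold sigmaP
  rw [Finset.prod_ite, Finset.prod_const, Finset.prod_const, one_pow, mul_one, hfil]
  rw [Finset.card_insert_of_notMem (by simp [hij]), Finset.card_singleton]
  norm_num

noncomputable def Pop (p : Fin (r+s) × Fin (r+s)) :
    CliffordAlgebra (Qrs r s) →ₗ[ℝ] CliffordAlgebra (Qrs r s) :=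
  (2⁻¹ : ℝ) • (LinearMap.id + (CliffordAlgebra.map (flipP r s p).toIsometry).toLinearMap)

lemma Pop_apply (p : Fin (r+s) × Fin (r+s)) (x : CliffordAlgebra (Qrs r s)) :
    Pop r s p x = (2⁻¹ : ℝ) • (x + CliffordAlgebra.map (flipP r s p).toIsometry x) := rfl

lemma Pop_fix (p : Fin (r+s) × Fin (r+s)) {x : CliffordAlgebra (Qrs r s)}
    (h : CliffordAlgebra.map (flipP r s p).toIsometry x = x) : Pop r s p x = x := by
  rw [Pop_apply, h, ← two_smul ℝ, smul_smul]
  norm_num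

lemma Pop_wrd_even (p : Fin (r+s) × Fin (r+s)) (hij : p.1 ≠ p.2) (l : List (Fin (r+s)))
    (h : Even (l.count p.1 + l.count p.2)) : Pop r s p (wrd r s l) = wrd r s l := by
  refine Pop_fix r s p ?_
  rw [show CliffordAlgebra.map (flipP r s p).toIsometry (wrd r s l)
      = (l.map (sigmaP r s p)).prod • wrd r s l from map_flip_wrd r s _ _ l]
  rw [sigmaP_prod_count r s p hij l, h.neg_one_pow, one_smul]

lemma Pop_wrd_odd (p : Fin (r+s) × Fin (r+s)) (hij : p.1 ≠ p.2) (l : List (Fin (r+s)))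
    (h : Odd (l.count p.1 + l.count p.2)) : Pop r s p (wrd r s l) = 0 := by
  rw [Pop_apply]
  rw [show CliffordAlgebra.map (flipP r s p).toIsometry (wrd r s l)
      = (l.map (sigmaP r s p)).prod • wrd r s l from map_flip_wrd r s _ _ l]
  rw [sigmaP_prod_count r s p hij l, h.neg_one_pow, neg_one_smul]
  simp

noncomputable def goP (ps : List (Fin (r+s) × Fin (r+s))) :
    CliffordAlgebra (Qrs r s) →ₗ[ℝ] CliffordAlgebra (Qrs r s) :=
  ps.foldr (fun p acc => (Pop r s p) ∘ₗ acc) LinearMap.id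

lemma goP_fix {x : CliffordAlgebra (Qrs r s)} :
    ∀ ps : List (Fin (r+s) × Fin (r+s)), (∀ p ∈ ps, Pop r s p x = x) → goP r s ps x = x
  | [], _ => rfl
  | p :: t, h => by
    rw [goP, List.foldr_cons, LinearMap.comp_apply, ← goP]
    rw [goP_fix t (fun q hq => h q (List.mem_cons_of_mem _ hq)), h p (List.mem_cons_self)]

lemma goP_cases {x : CliffordAlgebra (Qrs r s)} :
    ∀ ps : List (Fin (r+s) × Fin (r+s)), (∀ p ∈ ps, Pop r s p x = x ∨ Pop r s p x = 0) →
      goP r s ps x = x ∨ goP r s ps x = 0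
  | [], _ => Or.inl rfl
  | p :: t, h => by
    rw [goP, List.foldr_cons, LinearMap.comp_apply, ← goP]
    rcases goP_cases t (fun q hq => h q (List.mem_cons_of_mem _ hq)) with ht | ht
    · rw [ht]; exact h p (List.mem_cons_self)
    · rw [ht, map_zero]; exact Or.inr rfl

lemma goP_zero {x : CliffordAlgebra (Qrs r s)} :
    ∀ ps : List (Fin (r+s) × Fin (r+s)), (∀ p ∈ ps, Pop r s p x = x ∨ Pop r s p x = 0) →
      (∃ p ∈ ps, Pop r s p x = 0) → goP r s ps x = 0
  | [], _, hz => by simp at hz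
  | p :: t, h, hz => by
    rw [goP, List.foldr_cons, LinearMap.comp_apply, ← goP]
    obtain ⟨q, hq, hq0⟩ := hz
    rcases List.mem_cons.mp hq with rfl | hqt
    · rcases goP_cases r s t (fun q' hq' => h q' (List.mem_cons_of_mem _ hq')) with ht | ht
      · rw [ht, hq0]
      · rw [ht, map_zero]
    · rw [goP_zero t (fun q' hq' => h q' (List.mem_cons_of_mem _ hq')) ⟨q, hqt, hq0⟩, map_zero]

end Proj

section Psi
variable (r s : ℕ)

set_option synthInstance.maxHeartbeats 1000000 in
noncomputable def psiF : CliffordAlgebra (Qrs r s) →ₗ[ℝ] ℝ :=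
  (ExteriorAlgebra.liftAlternating
      (Pi.single 0 (AlternatingMap.constOfIsEmpty ℝ (Fin (r+s) → ℝ) (Fin 0) 1))) ∘ₗ
    (equivExterior (Qrs r s)).toLinearMap

set_option synthInstance.maxHeartbeats 1000000 in
lemma psiF_one : psiF r s 1 = 1 := by
  rw [psiF, LinearMap.comp_apply, LinearEquiv.coe_coe]
  have h1 : equivExterior (Qrs r s) (1 : CliffordAlgebra (Qrs r s)) = 1 := by
    show changeForm changeForm.associated_neg_proof (1 : CliffordAlgebra (Qrs r s)) = 1
    exact CliffordAlgebra.changeForm_one changeForm.associated_neg_proof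
  rw [h1, ExteriorAlgebra.liftAlternating_one, Pi.single_eq_same]
  simp

set_option synthInstance.maxHeartbeats 1000000 in
lemma psiF_volumeElt (hrs : 1 ≤ r + s) : psiF r s (volumeElt r s) = 0 := by
  rw [psiF, LinearMap.comp_apply, LinearEquiv.coe_coe]
  have h0 := equivExterior_orthogonal_prod
    ((List.finRange (r + s)).map (fun i => (Pi.single i 1 : Fin (r + s) → ℝ)))
    (pairwise_polar_single r s)
  have h1 : equivExterior (Qrs r s) (volumeElt r s)
      = ExteriorAlgebra.ιMulti ℝ (r+s) (fun i => (Pi.single i 1 : Fin (r+s) → ℝ)) := by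
    rw [volumeElt_eq r s, h0, List.map_map, ExteriorAlgebra.ιMulti_apply, List.ofFn_eq_map]
    rfl
  rw [h1, ExteriorAlgebra.liftAlternating_apply_ιMulti,
    Pi.single_eq_of_ne (by omega : r + s ≠ 0)]
  simp

end Psi

end Aux

set_option synthInstance.maxHeartbeats 1000000 in
set_option maxHeartbeats 1000000 in
/-- `Cl(r,s)` admits an `SO(r,s)`-equivariant complex structure iff either
`s` is odd and `r+s ≡ 0, 3 (mod 4)`, or `s` is even and `r+s ≡ 1, 2 (mod 4)`. -/
theorem exists_equivariant_complex_structure_iff (r s : ℕ) (hrs : 1 ≤ r + s) :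
    (∃ J : CliffordAlgebra (Qrs r s) →ₗ[ℝ] CliffordAlgebra (Qrs r s),
      (∀ x, J (J x) = -x) ∧
      (∀ x y, J (x * y) = x * J y) ∧
      (∀ f : (Qrs r s).IsometryEquiv (Qrs r s), IsSpecial f →
        ∀ x, J (CliffordAlgebra.map f.toIsometry x) =
          CliffordAlgebra.map f.toIsometry (J x))) ↔
    ((Odd s ∧ ((r + s) % 4 = 0 ∨ (r + s) % 4 = 3)) ∨
     (Even s ∧ ((r + s) % 4 = 1 ∨ (r + s) % 4 = 2))) := by
  constructor
  · rintro ⟨J, hJJ, hJmul, hJequiv⟩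
    rw [← parity_iff]
    by_contra hpar
    have heps : volumeElt r s * volumeElt r s = 1 := by
      rw [volumeElt_sq r s, (Nat.not_odd_iff_even.mp hpar).neg_one_pow, map_one]
    set w := J 1 with hw
    have hww : w * w = -1 := by
      have h1 : J w = w * w := by
        have h := hJmul w 1
        rw [mul_one] at h
        rw [h, ← hw]
      have h2 := hJJ 1
      rw [← hw] at h2
      rw [← h1, h2]
    have hfix : ∀ p : Fin (r+s) × Fin (r+s), p.1 ≠ p.2 → Pop r s p w = w := by
      intro p hp
      refine Pop_fix r s p ?_
      have h := hJequiv (flipP r s p) (flipP_special r s p hp) 1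
      rw [map_one] at h
      rw [hw]
      exact h.symm
    classical
    set ps : List (Fin (r+s) × Fin (r+s)) :=
      ((List.finRange (r+s)).product (List.finRange (r+s))).filter
        (fun p => decide (p.1 ≠ p.2)) with hps
    have hmem_ps : ∀ p : Fin (r+s) × Fin (r+s), p.1 ≠ p.2 → p ∈ ps := by
      intro p hp
      rw [hps, List.mem_filter]
      refine ⟨List.mem_product.mpr ⟨List.mem_finRange _, List.mem_finRange _⟩, ?_⟩
      simpa using hp
    have hne_ps : ∀ p ∈ ps, p.1 ≠ p.2 := by
      intro p hp
      rw [hps, List.mem_filter] at hp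
      simpa using hp.2
    have hPw : goP r s ps w = w := goP_fix r s ps (fun p hp => hfix p (hne_ps p hp))
    have hwspan : w ∈ Submodule.span ℝ
        ({1, volumeElt r s} : Set (CliffordAlgebra (Qrs r s))) := by
      have hmap : goP r s ps w ∈ Submodule.map (goP r s ps)
          (Submodule.span ℝ (Set.range (wrd r s))) :=
        Submodule.mem_map_of_mem (mem_span_wrd r s w)
      rw [Submodule.map_span] at hmap
      rw [← hPw]
      refine Submodule.span_le.mpr ?_ hmap
      rintro _ ⟨_, ⟨l, rfl⟩, rfl⟩
      obtain ⟨c, u, hus, hum, hue⟩ := normalize_wrd r s l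
      have hcases : ∀ p ∈ ps, Pop r s p (wrd r s l) = wrd r s l ∨
          Pop r s p (wrd r s l) = 0 := by
        intro p hp
        rcases Nat.even_or_odd (l.count p.1 + l.count p.2) with he | ho
        · exact Or.inl (Pop_wrd_even r s p (hne_ps p hp) l he)
        · exact Or.inr (Pop_wrd_odd r s p (hne_ps p hp) l ho)
      by_cases hall : ∀ k, k ∈ u
      · have hfixall : goP r s ps (wrd r s l) = wrd r s l := by
          refine goP_fix r s ps fun p hp => ?_
          refine Pop_wrd_even r s p (hne_ps p hp) l ?_
          have h1 : Odd (l.count p.1) := (hum p.1).mp (hall p.1)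
          have h2 : Odd (l.count p.2) := (hum p.2).mp (hall p.2)
          exact h1.add_odd h2
        rw [hfixall, hue, sorted_full_eq_finRange u hus hall, ← volumeElt_eq_wrd]
        exact Submodule.smul_mem _ c (Submodule.subset_span (by simp))
      · by_cases hnil : u = []
        · have hfixall : goP r s ps (wrd r s l) = wrd r s l := by
            refine goP_fix r s ps fun p hp => ?_
            refine Pop_wrd_even r s p (hne_ps p hp) l ?_
            have hev : ∀ k, Even (l.count k) := by
              intro k
              have := (hum k)
              simp [hnil] at this
              exact this
            exact (hev p.1).add (hev p.2)
          rw [hfixall, hue, hnil, wrd_nil]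
          exact Submodule.smul_mem _ c (Submodule.subset_span (by simp))
        · push_neg at hall
          obtain ⟨j, hj⟩ := hall
          obtain ⟨i, hi⟩ := List.exists_mem_of_ne_nil u hnil
          have hij : i ≠ j := fun h => hj (h ▸ hi)
          have hzero : Pop r s (i, j) (wrd r s l) = 0 := by
            refine Pop_wrd_odd r s (i, j) hij l ?_
            have h1 : Odd (l.count i) := (hum i).mp hi
            have h2 : ¬ Odd (l.count j) := fun h => hj ((hum j).mpr h)
            show Odd (l.count i + l.count j)
            rw [Nat.odd_iff] at h1 h2 ⊢
            omega
          rw [goP_zero r s ps hcases ⟨(i, j), hmem_ps (i, j) hij, hzero⟩]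
          exact Submodule.zero_mem _
    obtain ⟨a, b, hab⟩ := Submodule.mem_span_pair.mp hwspan
    have hexp : w * w = (a * a + b * b) • (1 : CliffordAlgebra (Qrs r s))
        + (2 * (a * b)) • volumeElt r s := by
      rw [← hab]
      simp only [add_mul, mul_add, smul_mul_assoc, mul_smul_comm, smul_smul,
        one_mul, mul_one, heps]
      module
    have hψ := congrArg (psiF r s) hexp
    rw [hww] at hψ
    rw [map_add, map_smul, map_smul, map_neg, psiF_one, psiF_volumeElt r s hrs] at hψ
    simp only [smul_eq_mul, mul_one, mul_zero, add_zero] at hψ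
    nlinarith [sq_nonneg a, sq_nonneg b, hψ]
  · intro hcond
    have hodd : Odd ((r+s).choose 2 + r) := (parity_iff r s).mpr hcond
    have hsq : volumeElt r s * volumeElt r s = -1 := by
      rw [volumeElt_sq r s, hodd.neg_one_pow, map_neg, map_one]
    refine ⟨LinearMap.mulRight ℝ (volumeElt r s), fun x => ?_, fun x y => ?_,
      fun f hf x => ?_⟩
    · simp only [LinearMap.mulRight_apply]
      rw [mul_assoc, hsq, mul_neg_one]
    · simp only [LinearMap.mulRight_apply, mul_assoc]
    · simp only [LinearMap.mulRight_apply, map_mul]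
      have hdet : LinearMap.det
          ((f.toLinearEquiv : (Fin (r+s) → ℝ) ≃ₗ[ℝ] (Fin (r+s) → ℝ)) :
            (Fin (r+s) → ℝ) →ₗ[ℝ] (Fin (r+s) → ℝ)) = 1 := by
        have h := congrArg Units.val hf
        rwa [LinearEquiv.coe_det] at h
      rw [map_volumeElt r s f, hdet, one_smul]
end

section
/- Let r, s be natural numbers and let ω be the volume element of Cl(r,s). If x ∈ Cl(r,s) satisfies map f x = x for every special isometry equivalence f of Q_{r,s}, then x lies in the ℝ-linear span of 1 and ω; that is, x = c·1 + d·ω for some real numbers c, d. -/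
open CliffordAlgebra

namespace SOInv

variable (r s : ℕ)

noncomputable def gen (j : Fin (r + s)) : CliffordAlgebra (Qrs r s) :=
  ι (Qrs r s) (Pi.single j 1)

lemma Qrs_single (j : Fin (r + s)) :
    Qrs r s (Pi.single j 1) = if (j : ℕ) < r then (-1 : ℝ) else 1 := by
  simp [Qrs, Pi.single_apply]

lemma polar_single {j k : Fin (r + s)} (h : j ≠ k) :
    QuadraticMap.polar (Qrs r s) (Pi.single j 1) (Pi.single k 1) = 0 := by
  simp only [QuadraticMap.polar, Qrs, QuadraticMap.weightedSumSquares_apply]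
  rw [← Finset.sum_sub_distrib, ← Finset.sum_sub_distrib]
  apply Finset.sum_eq_zero
  intro i _
  rcases eq_or_ne i j with rfl | hij <;> rcases eq_or_ne i k with rfl | hik <;>
    simp_all [Pi.single_apply]

lemma gen_sq (j : Fin (r + s)) :
    gen r s j * gen r s j =
      algebraMap ℝ _ (if (j : ℕ) < r then (-1 : ℝ) else 1) := by
  rw [gen, ι_sq_scalar, Qrs_single]

lemma gen_anticomm {j k : Fin (r + s)} (h : j ≠ k) :
    gen r s j * gen r s k = -(gen r s k * gen r s j) := by
  have := ι_mul_ι_add_swap (Q := Qrs r s) (Pi.single j 1) (Pi.single k 1)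
  rw [polar_single r s h, map_zero] at this
  rw [gen, gen]
  exact eq_neg_of_add_eq_zero_left this

/-- sign of coordinate `j` under the flip at the pair `p`. -/
def sg (p : Fin (r + s) × Fin (r + s)) (j : Fin (r + s)) : ℝ :=
  if j = p.1 ∨ j = p.2 then -1 else 1

noncomputable def flipEquiv (p : Fin (r + s) × Fin (r + s)) :
    (Fin (r + s) → ℝ) ≃ₗ[ℝ] (Fin (r + s) → ℝ) :=
  LinearEquiv.piCongrRight
    (fun j => if j = p.1 ∨ j = p.2 then LinearEquiv.neg ℝ else LinearEquiv.refl ℝ ℝ)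

lemma flipEquiv_apply (p : Fin (r + s) × Fin (r + s)) (x : Fin (r + s) → ℝ)
    (j : Fin (r + s)) :
    flipEquiv r s p x j = sg r s p j * x j := by
  simp only [flipEquiv, LinearEquiv.piCongrRight_apply, sg]
  split <;> simp

noncomputable def flip (p : Fin (r + s) × Fin (r + s)) :
    (Qrs r s).IsometryEquiv (Qrs r s) where
  toLinearEquiv := flipEquiv r s p
  map_app' := by
    intro x
    show Qrs r s (flipEquiv r s p x) = Qrs r s x
    simp only [Qrs, QuadraticMap.weightedSumSquares_apply]
    apply Finset.sum_congr rfl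
    intro j _
    rw [flipEquiv_apply]
    simp only [sg]
    split_ifs <;> ring_nf

lemma flip_special {p : Fin (r + s) × Fin (r + s)} (h : p.1 ≠ p.2) :
    IsSpecial (flip r s p) := by
  unfold IsSpecial
  apply Units.ext
  rw [LinearEquiv.coe_det]
  have : ((flip r s p).toLinearEquiv : (Fin (r + s) → ℝ) →ₗ[ℝ] (Fin (r + s) → ℝ)) =
      Matrix.toLin' (Matrix.diagonal (sg r s p)) := by
    apply LinearMap.ext
    intro x
    funext j
    show flipEquiv r s p x j = _
    rw [flipEquiv_apply]
    simp [Matrix.mulVec_diagonal]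
  rw [this, LinearMap.det_toLin', Matrix.det_diagonal]
  have : ∀ j, sg r s p j = if j ∈ ({p.1, p.2} : Finset (Fin (r + s))) then (-1 : ℝ) else 1 := by
    intro j; simp [sg]
  rw [Finset.prod_congr rfl (fun j _ => this j), Finset.prod_ite_mem,
    Finset.univ_inter, Finset.prod_const]
  rw [Finset.card_insert_of_notMem (by simpa using h), Finset.card_singleton]
  norm_num

noncomputable def word (l : List (Fin (r + s))) : CliffordAlgebra (Qrs r s) :=
  (l.map (gen r s)).prod

lemma word_nil : word r s [] = 1 := rfl

lemma word_cons (j : Fin (r + s)) (l : List (Fin (r + s))) :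
    word r s (j :: l) = gen r s j * word r s l := by
  simp [word]

lemma word_append (l l' : List (Fin (r + s))) :
    word r s (l ++ l') = word r s l * word r s l' := by
  simp [word]

/-- every element is in the span of words. -/
lemma mem_span_words (y : CliffordAlgebra (Qrs r s)) :
    y ∈ Submodule.span ℝ (Set.range (word r s)) := by
  set W := Submodule.span ℝ (Set.range (word r s)) with hW
  induction y using CliffordAlgebra.induction with
  | algebraMap c =>
      rw [Algebra.algebraMap_eq_smul_one]
      exact W.smul_mem c (Submodule.subset_span ⟨[], rfl⟩)
  | ι v =>
      have hv : v = ∑ j, v j • (Pi.single j (1 : ℝ) : Fin (r + s) → ℝ) := by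
        funext k
        simp [Pi.single_apply, Finset.sum_apply]
      rw [hv, map_sum]
      refine Submodule.sum_mem _ (fun j _ => ?_)
      rw [map_smul]
      refine W.smul_mem _ (Submodule.subset_span ⟨[j], ?_⟩)
      simp [word, gen]
  | mul a b ha hb =>
      have : W * W ≤ W := by
        rw [hW, Submodule.span_mul_span]
        refine Submodule.span_le.2 ?_
        rintro _ ⟨_, ⟨l, rfl⟩, _, ⟨l', rfl⟩, rfl⟩
        exact Submodule.subset_span ⟨l ++ l', by rw [word_append]⟩
      exact this (Submodule.mul_mem_mul ha hb)
  | add a b ha hb => exact W.add_mem ha hb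

/-- product over the part of `L` lying in `S`. -/
noncomputable def eW (L : List (Fin (r + s))) (S : Finset (Fin (r + s))) :
    CliffordAlgebra (Qrs r s) :=
  word r s (L.filter (fun k => k ∈ S))

noncomputable def eS (S : Finset (Fin (r + s))) : CliffordAlgebra (Qrs r s) :=
  eW r s (List.finRange (r + s)) S

lemma gen_mul_eW (S : Finset (Fin (r + s))) (j : Fin (r + s)) :
    ∀ L : List (Fin (r + s)), L.Nodup → j ∈ L →
      ∃ c : ℝ, gen r s j * eW r s L S =
        c • eW r s L (if j ∈ S then S.erase j else insert j S) := by
  intro L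
  induction L with
  | nil => intro _ h; simp at h
  | cons a L ih =>
      intro hnd hmem
      have hndL : L.Nodup := (List.nodup_cons.mp hnd).2
      have haL : a ∉ L := (List.nodup_cons.mp hnd).1
      rcases eq_or_ne j a with rfl | hja
      · -- j = a, and j ∉ L
        have hfilt : ∀ T T' : Finset (Fin (r + s)),
            (∀ k, k ≠ j → (k ∈ T ↔ k ∈ T')) →
            L.filter (fun k => k ∈ T) = L.filter (fun k => k ∈ T') := by
          intro T T' hTT'
          apply List.filter_congr
          intro k hk
          have : k ≠ j := fun h => haL (h ▸ hk)
          simp [hTT' k this]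
        by_cases hjS : j ∈ S
        · refine ⟨if (j : ℕ) < r then -1 else 1, ?_⟩
          rw [if_pos hjS]
          have h1 : eW r s (j :: L) S = gen r s j * eW r s L S := by
            simp [eW, List.filter_cons, hjS, word_cons]
          have h2 : eW r s (j :: L) (S.erase j) = eW r s L S := by
            simp only [eW, List.filter_cons]
            rw [if_neg (by simp), hfilt (S.erase j) S
              (fun k hk => by simp [Finset.mem_erase, hk])]
          rw [h1, ← mul_assoc, gen_sq, h2, Algebra.algebraMap_eq_smul_one,
            smul_mul_assoc, one_mul]
        · refine ⟨1, ?_⟩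
          rw [if_neg hjS, one_smul]
          have h1 : eW r s (j :: L) S = eW r s L S := by
            simp [eW, List.filter_cons, hjS]
          have h2 : eW r s (j :: L) (insert j S) = gen r s j * eW r s L S := by
            simp only [eW, List.filter_cons]
            rw [if_pos (by simp), word_cons, hfilt (insert j S) S
              (fun k hk => by simp [Finset.mem_insert, hk])]
          rw [h1, h2]
      · -- j ≠ a
        have hjL : j ∈ L := by
          rcases List.mem_cons.mp hmem with h | h
          · exact absurd h hja
          · exact h
        obtain ⟨c, hc⟩ := ih hndL hjL
        by_cases haS : a ∈ S
        · have haS' : a ∈ (if j ∈ S then S.erase j else insert j S) := by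
            split <;> simp [Finset.mem_erase, Finset.mem_insert, haS, Ne.symm hja]
          refine ⟨-c, ?_⟩
          have h1 : eW r s (a :: L) S = gen r s a * eW r s L S := by
            simp [eW, List.filter_cons, haS, word_cons]
          have h2 : eW r s (a :: L) (if j ∈ S then S.erase j else insert j S)
              = gen r s a * eW r s L (if j ∈ S then S.erase j else insert j S) := by
            simp [eW, List.filter_cons, haS', word_cons]
          rw [h1, h2, ← mul_assoc, gen_anticomm r s hja, neg_mul, mul_assoc,
            hc, neg_smul, ← smul_neg, mul_smul_comm]
          simp
        · have haS' : a ∉ (if j ∈ S then S.erase j else insert j S) := by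
            split <;> simp [Finset.mem_erase, Finset.mem_insert, haS, Ne.symm hja]
          refine ⟨c, ?_⟩
          have h1 : eW r s (a :: L) S = eW r s L S := by
            simp [eW, List.filter_cons, haS]
          have h2 : eW r s (a :: L) (if j ∈ S then S.erase j else insert j S)
              = eW r s L (if j ∈ S then S.erase j else insert j S) := by
            simp [eW, List.filter_cons, haS']
          rw [h1, h2, hc]

lemma gen_mul_eS (S : Finset (Fin (r + s))) (j : Fin (r + s)) :
    ∃ (c : ℝ) (S' : Finset (Fin (r + s))), gen r s j * eS r s S = c • eS r s S' :=
  let ⟨c, hc⟩ := gen_mul_eW r s S j (List.finRange (r + s))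
    (List.nodup_finRange _) (List.mem_finRange j)
  ⟨c, _, hc⟩

lemma word_mem_span_eS (l : List (Fin (r + s))) :
    word r s l ∈ Submodule.span ℝ (Set.range (eS r s)) := by
  induction l with
  | nil =>
      refine Submodule.subset_span ⟨∅, ?_⟩
      simp [eS, eW, word_nil]
  | cons j l ih =>
      rw [word_cons]
      have h : ∀ y ∈ Set.range (eS r s),
          gen r s j * y ∈ Submodule.span ℝ (Set.range (eS r s)) := by
        rintro _ ⟨S, rfl⟩
        obtain ⟨c, S', hc⟩ := gen_mul_eS r s S j
        rw [hc]
        exact Submodule.smul_mem _ c (Submodule.subset_span ⟨S', rfl⟩)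
      have key : ∀ y, y ∈ Submodule.span ℝ (Set.range (eS r s)) →
          gen r s j * y ∈ Submodule.span ℝ (Set.range (eS r s)) := by
        intro y hy
        induction hy using Submodule.span_induction with
        | mem y hy => exact h y hy
        | zero => simp
        | add a b _ _ ha hb => rw [mul_add]; exact Submodule.add_mem _ ha hb
        | smul c a _ ha => rw [mul_smul_comm]; exact Submodule.smul_mem _ c ha
      exact key _ ih

lemma mem_span_eS (y : CliffordAlgebra (Qrs r s)) :
    y ∈ Submodule.span ℝ (Set.range (eS r s)) := by
  have h := mem_span_words r s y
  refine Submodule.span_le.2 ?_ h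
  rintro _ ⟨l, rfl⟩
  exact word_mem_span_eS r s l

lemma eS_empty : eS r s ∅ = 1 := by
  simp [eS, eW, word]

lemma eS_univ : eS r s Finset.univ = volumeElt r s := by
  have : (List.finRange (r + s)).filter (fun k => k ∈ (Finset.univ : Finset (Fin (r + s)))) =
      List.finRange (r + s) := by
    apply List.filter_eq_self.2
    intro a _
    simp
  rw [eS, eW, this, volumeElt, word, List.ofFn_eq_map]
  rfl

noncomputable def T (p : Fin (r + s) × Fin (r + s)) :
    CliffordAlgebra (Qrs r s) →ₐ[ℝ] CliffordAlgebra (Qrs r s) :=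
  CliffordAlgebra.map (flip r s p).toIsometry

lemma flip_apply (p : Fin (r + s) × Fin (r + s)) (x : Fin (r + s) → ℝ) (j : Fin (r + s)) :
    flip r s p x j = sg r s p j * x j :=
  flipEquiv_apply r s p x j

lemma flip_single (p : Fin (r + s) × Fin (r + s)) (j : Fin (r + s)) :
    flip r s p (Pi.single j (1 : ℝ)) = sg r s p j • (Pi.single j 1 : Fin (r + s) → ℝ) := by
  funext k
  rw [flip_apply]
  rcases eq_or_ne k j with rfl | hkj
  · simp
  · simp [Pi.single_apply, hkj]

lemma T_gen (p : Fin (r + s) × Fin (r + s)) (j : Fin (r + s)) :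
    T r s p (gen r s j) = sg r s p j • gen r s j := by
  rw [T, gen, CliffordAlgebra.map_apply_ι]
  show ι (Qrs r s) ((flip r s p) (Pi.single j 1)) = _
  rw [flip_single, map_smul]

lemma T_word (p : Fin (r + s) × Fin (r + s)) (l : List (Fin (r + s))) :
    T r s p (word r s l) = (l.map (sg r s p)).prod • word r s l := by
  induction l with
  | nil => simp [word]
  | cons j l ih =>
      have : word r s (j :: l) = gen r s j * word r s l := by simp [word]
      rw [this, map_mul, T_gen, ih, List.map_cons, List.prod_cons,
        smul_mul_assoc, mul_smul_comm, smul_smul]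

lemma T_eS {p : Fin (r + s) × Fin (r + s)} (hp : p.1 ≠ p.2) (S : Finset (Fin (r + s))) :
    T r s p (eS r s S) =
      (if ((p.1 ∈ S) ↔ (p.2 ∈ S)) then (1 : ℝ) else -1) • eS r s S := by
  rw [eS, eW, T_word]
  congr 1
  set l := (List.finRange (r + s)).filter (fun k => k ∈ S) with hl
  have hnd : l.Nodup := List.Nodup.filter _ (List.nodup_finRange _)
  have htf : l.toFinset = S := by
    ext k
    simp [hl, List.mem_filter, List.mem_finRange]
  rw [← List.prod_toFinset _ hnd, htf]
  have : ∀ j, sg r s p j = if j ∈ ({p.1, p.2} : Finset (Fin (r + s))) then (-1 : ℝ) else 1 := by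
    intro j; simp [sg]
  rw [Finset.prod_congr rfl (fun j _ => this j), Finset.prod_ite_mem, Finset.prod_const]
  by_cases h1 : p.1 ∈ S <;> by_cases h2 : p.2 ∈ S
  · have : S ∩ {p.1, p.2} = {p.1, p.2} := by
      ext k; simp only [Finset.mem_inter, Finset.mem_insert, Finset.mem_singleton]
      constructor
      · tauto
      · rintro (rfl | rfl) <;> simp [h1, h2]
    rw [this, Finset.card_insert_of_notMem (by simpa using hp), Finset.card_singleton]
    simp [h1, h2]
  · have : S ∩ {p.1, p.2} = {p.1} := by
      ext k; simp only [Finset.mem_inter, Finset.mem_insert, Finset.mem_singleton]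
      constructor
      · rintro ⟨hk, rfl | rfl⟩ <;> tauto
      · rintro rfl; simp [h1]
    rw [this, Finset.card_singleton]
    simp [h1, h2]
  · have : S ∩ {p.1, p.2} = {p.2} := by
      ext k; simp only [Finset.mem_inter, Finset.mem_insert, Finset.mem_singleton]
      constructor
      · rintro ⟨hk, rfl | rfl⟩ <;> tauto
      · rintro rfl; simp [h2]
    rw [this, Finset.card_singleton]
    simp [h1, h2]
  · have : S ∩ {p.1, p.2} = ∅ := by
      ext k; simp only [Finset.mem_inter, Finset.mem_insert, Finset.mem_singleton]
      constructor
      · rintro ⟨hk, rfl | rfl⟩ <;> tauto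
      · simp
    rw [this, Finset.card_empty]
    simp [h1, h2]

/-- the projector `(1/2)(1 + T p)`. -/
noncomputable def Pe (p : Fin (r + s) × Fin (r + s)) :
    Module.End ℝ (CliffordAlgebra (Qrs r s)) :=
  (2⁻¹ : ℝ) • (LinearMap.id + (T r s p).toLinearMap)

lemma Pe_apply (p : Fin (r + s) × Fin (r + s)) (y : CliffordAlgebra (Qrs r s)) :
    Pe r s p y = (2⁻¹ : ℝ) • (y + T r s p y) := by
  simp [Pe]

lemma Pe_fix {p : Fin (r + s) × Fin (r + s)} {y : CliffordAlgebra (Qrs r s)}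
    (h : T r s p y = y) : Pe r s p y = y := by
  rw [Pe_apply, h, ← two_smul ℝ y, smul_smul]
  norm_num

lemma Pe_eS {p : Fin (r + s) × Fin (r + s)} (hp : p.1 ≠ p.2) (S : Finset (Fin (r + s))) :
    Pe r s p (eS r s S) = if ((p.1 ∈ S) ↔ (p.2 ∈ S)) then eS r s S else 0 := by
  rw [Pe_apply, T_eS r s hp]
  split_ifs with h
  · rw [one_smul, ← two_smul ℝ, smul_smul]; norm_num
  · rw [neg_smul, one_smul, add_neg_cancel, smul_zero]

noncomputable def Plist (l : List (Fin (r + s) × Fin (r + s))) :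
    Module.End ℝ (CliffordAlgebra (Qrs r s)) :=
  l.foldr (fun p acc => (Pe r s p).comp acc) LinearMap.id

lemma Plist_fix (l : List (Fin (r + s) × Fin (r + s))) (y : CliffordAlgebra (Qrs r s))
    (h : ∀ p ∈ l, T r s p y = y) : Plist r s l y = y := by
  induction l with
  | nil => rfl
  | cons p l ih =>
      show Pe r s p (Plist r s l y) = y
      rw [ih (fun q hq => h q (List.mem_cons_of_mem _ hq)),
        Pe_fix r s (h p (List.mem_cons_self))]

lemma Plist_eS (l : List (Fin (r + s) × Fin (r + s)))
    (hl : ∀ p ∈ l, p.1 ≠ p.2) (S : Finset (Fin (r + s))) :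
    Plist r s l (eS r s S) =
      if (∀ p ∈ l, ((p.1 ∈ S) ↔ (p.2 ∈ S))) then eS r s S else 0 := by
  induction l with
  | nil => simp [Plist]
  | cons p l ih =>
      show Pe r s p (Plist r s l (eS r s S)) = _
      rw [ih (fun q hq => hl q (List.mem_cons_of_mem _ hq))]
      by_cases h : ∀ q ∈ l, ((q.1 ∈ S) ↔ (q.2 ∈ S))
      · rw [if_pos h, Pe_eS r s (hl p (List.mem_cons_self))]
        by_cases hps : (p.1 ∈ S) ↔ (p.2 ∈ S)
        · rw [if_pos hps, if_pos]
          intro q hq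
          rcases List.mem_cons.mp hq with rfl | hq
          · exact hps
          · exact h q hq
        · rw [if_neg hps, if_neg]
          intro hall
          exact hps (hall p (List.mem_cons_self))
      · rw [if_neg h, map_zero, if_neg]
        intro hall
        exact h (fun q hq => hall q (List.mem_cons_of_mem _ hq))

noncomputable def allPairs : List (Fin (r + s) × Fin (r + s)) :=
  ((List.finRange (r + s)).product (List.finRange (r + s))).filter
    (fun p => p.1 ≠ p.2)

lemma mem_allPairs (p : Fin (r + s) × Fin (r + s)) :
    p ∈ allPairs r s ↔ p.1 ≠ p.2 := by
  simp only [allPairs, List.mem_filter, decide_eq_true_eq, and_iff_right_iff_imp]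
  intro _
  rw [List.pair_mem_product]
  exact ⟨List.mem_finRange _, List.mem_finRange _⟩

end SOInv

open SOInv in
/-- Any `SO(r,s)`-invariant element of `Cl(r,s)` lies in the span of `1` and `ω`. -/
theorem invariant_mem_span_one_volumeElt (r s : ℕ)
    (x : CliffordAlgebra (Qrs r s))
    (hx : ∀ f : (Qrs r s).IsometryEquiv (Qrs r s), IsSpecial f →
      CliffordAlgebra.map f.toIsometry x = x) :
    ∃ c d : ℝ, x = c • (1 : CliffordAlgebra (Qrs r s)) + d • volumeElt r s := by
  set V : Submodule ℝ (CliffordAlgebra (Qrs r s)) :=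
    Submodule.span ℝ {1, volumeElt r s} with hV
  have hplist : ∀ p ∈ allPairs r s, p.1 ≠ p.2 :=
    fun p hp => (mem_allPairs r s p).mp hp
  have hfix : Plist r s (allPairs r s) x = x :=
    Plist_fix r s _ x (fun p hp => hx (flip r s p) (flip_special r s (hplist p hp)))
  have hmem : x ∈ V := by
    rw [← hfix]
    have h1 : x ∈ Submodule.span ℝ (Set.range (eS r s)) := mem_span_eS r s x
    have h2 : Submodule.map (Plist r s (allPairs r s)) (Submodule.span ℝ (Set.range (eS r s)))
        ≤ V := by
      rw [Submodule.map_span, Submodule.span_le]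
      rintro _ ⟨_, ⟨S, rfl⟩, rfl⟩
      rw [Plist_eS r s _ hplist S]
      split_ifs with h
      · have hS : S = ∅ ∨ S = Finset.univ := by
          by_contra hc
          push_neg at hc
          obtain ⟨hne, hnu⟩ := hc
          obtain ⟨a, ha⟩ := hne
          have : ∃ b, b ∉ S := by
            by_contra hb
            push_neg at hb
            exact hnu (Finset.eq_univ_iff_forall.mpr hb)
          obtain ⟨b, hb⟩ := this
          have hab : a ≠ b := fun hab => hb (hab ▸ ha)
          have := h (a, b) ((mem_allPairs r s (a, b)).mpr hab)
          simp only at this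
          exact hb (this.mp ha)
        rcases hS with rfl | rfl
        · rw [eS_empty]
          exact Submodule.subset_span (Set.mem_insert _ _)
        · rw [eS_univ]
          exact Submodule.subset_span (Set.mem_insert_of_mem _ rfl)
      · exact Submodule.zero_mem V
    exact h2 ⟨x, h1, rfl⟩
  obtain ⟨c, d, hcd⟩ := Submodule.mem_span_pair.mp hmem
  exact ⟨c, d, hcd.symm⟩
end

section
/- Let r, s be natural numbers with r + s ≥ 1 and suppose the volume element ω of Cl(r,s) satisfies ω² = -1 (for example, (r,s) = (3,1)). Let P : Cl(r,s) → Cl(r,s) be an ℝ-linear map satisfying (i) P ∘ P = P, (ii) P(x*y) = x * P(y) for all x, y ∈ Cl(r,s), and (iii) P(map f x) = map f (P x) for every special isometry equivalence f of Q_{r,s}. Then P = 0 or P = id. -/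
open CliffordAlgebra

namespace EP
variable {r s : ℕ}

noncomputable def q (r : ℕ) {s : ℕ} (i : Fin (r + s)) : ℝ := if (i : ℕ) < r then -1 else 1

lemma q_sq (i : Fin (r + s)) : q r i * q r i = 1 := by
  unfold q; split_ifs <;> norm_num

lemma q_ne_zero (i : Fin (r + s)) : q r i ≠ 0 := by
  unfold q; split_ifs <;> norm_num

noncomputable def eC (r s : ℕ) (i : Fin (r + s)) : CliffordAlgebra (Qrs r s) :=
  ι (Qrs r s) (Pi.single i 1)

lemma Q_single (i : Fin (r + s)) : Qrs r s (Pi.single i 1) = q r i := by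
  rw [Qrs, QuadraticMap.weightedSumSquares_apply]
  rw [Finset.sum_eq_single i]
  · simp [q]
  · intro k _ hk; simp [Pi.single_apply, hk]
  · simp

lemma Q_single_add {i j : Fin (r + s)} (hij : i ≠ j) :
    Qrs r s (Pi.single i 1 + Pi.single j 1) = q r i + q r j := by
  rw [Qrs, QuadraticMap.weightedSumSquares_apply]
  rw [Fintype.sum_eq_add i j hij]
  · simp [Pi.single_apply, hij, hij.symm, q]
  · intro k ⟨hki, hkj⟩
    simp [Pi.single_apply, hki, hkj]

lemma eC_sq (i : Fin (r + s)) :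
    eC r s i * eC r s i = algebraMap ℝ _ (q r i) := by
  rw [eC, ι_sq_scalar, Q_single]

lemma eC_anticomm {i j : Fin (r + s)} (hij : i ≠ j) :
    eC r s i * eC r s j = -(eC r s j * eC r s i) := by
  have h := ι_mul_ι_add_swap (Q := Qrs r s) (Pi.single i 1) (Pi.single j 1)
  have hp : QuadraticMap.polar (⇑(Qrs r s)) (Pi.single i 1) (Pi.single j 1) = 0 := by
    rw [QuadraticMap.polar, Q_single_add hij, Q_single, Q_single]; ring
  rw [hp, map_zero] at h
  rw [eC, eC]; linear_combination (norm := noncomm_ring) h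


noncomputable def flipLin (r s : ℕ) (i j : Fin (r + s)) :
    (Fin (r + s) → ℝ) →ₗ[ℝ] (Fin (r + s) → ℝ) where
  toFun x := fun k => if k = i ∨ k = j then -x k else x k
  map_add' x y := by funext k; by_cases h : k = i ∨ k = j <;> simp [h] <;> ring
  map_smul' c x := by funext k; by_cases h : k = i ∨ k = j <;> simp [h] <;> ring

lemma flipLin_invol (i j : Fin (r + s)) :
    Function.Involutive (flipLin r s i j) := by
  intro x; funext k
  by_cases h : k = i ∨ k = j <;> simp [flipLin, h]

noncomputable def flipEquiv (i j : Fin (r + s)) : (Fin (r + s) → ℝ) ≃ₗ[ℝ] (Fin (r + s) → ℝ) :=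
  LinearEquiv.ofInvolutive (flipLin r s i j) (flipLin_invol i j)

noncomputable def flipIso (i j : Fin (r + s)) : (Qrs r s).IsometryEquiv (Qrs r s) where
  toLinearEquiv := flipEquiv i j
  map_app' m := by
    show Qrs r s (flipLin r s i j m) = Qrs r s m
    rw [Qrs, QuadraticMap.weightedSumSquares_apply, QuadraticMap.weightedSumSquares_apply]
    congr 1; funext k
    by_cases h : k = i ∨ k = j <;> simp [flipLin, h]

lemma flipIso_special {i j : Fin (r + s)} (hij : i ≠ j) : IsSpecial (flipIso i j) := by
  rw [IsSpecial]
  ext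
  rw [LinearEquiv.coe_det]
  have : ((flipIso i j).toLinearEquiv : (Fin (r+s) → ℝ) →ₗ[ℝ] (Fin (r+s) → ℝ)) =
      Matrix.toLin' (Matrix.diagonal (fun k => if k = i ∨ k = j then (-1 : ℝ) else 1)) := by
    apply LinearMap.ext; intro x; funext k
    rw [Matrix.toLin'_apply]
    show (if k = i ∨ k = j then -x k else x k) = _
    rw [Matrix.mulVec_diagonal]
    by_cases h : k = i ∨ k = j <;> simp [h]
  rw [this, LinearMap.det_toLin', Matrix.det_diagonal]
  have h2 : ∀ k : Fin (r + s), (if k = i ∨ k = j then (-1 : ℝ) else 1) =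
      (if k ∈ ({i, j} : Finset (Fin (r + s))) then (-1 : ℝ) else 1) := by
    intro k; simp [Finset.mem_insert, Finset.mem_singleton]
  simp_rw [h2]
  rw [Finset.prod_ite_mem, Finset.univ_inter, Finset.prod_const, Finset.card_pair hij]
  norm_num

lemma flipLin_single (i j k : Fin (r + s)) :
    flipLin r s i j (Pi.single k 1) =
      if k = i ∨ k = j then -Pi.single k 1 else Pi.single k 1 := by
  funext m
  simp only [flipLin, LinearMap.coe_mk, AddHom.coe_mk]
  by_cases h : k = i ∨ k = j
  · simp only [h, if_true, Pi.neg_apply]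
    by_cases hm : m = i ∨ m = j
    · simp [hm]
    · have hmk : m ≠ k := by rintro rfl; exact hm h
      simp [hm, Pi.single_apply, hmk]
  · simp only [h, if_false]
    by_cases hm : m = i ∨ m = j
    · have hmk : m ≠ k := by rintro rfl; exact h hm
      simp [hm, Pi.single_apply, hmk]
    · simp [hm]

lemma eC_mul_pair_left {i j k : Fin (r + s)} (hki : k ≠ i) (hkj : k ≠ j) :
    eC r s k * (eC r s i * eC r s j) = (eC r s i * eC r s j) * eC r s k := by
  rw [← mul_assoc, eC_anticomm hki, neg_mul, mul_assoc, eC_anticomm hkj, mul_neg, neg_neg,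
    mul_assoc]

lemma map_flip_mul {i j : Fin (r + s)} (hij : i ≠ j) (x : CliffordAlgebra (Qrs r s)) :
    CliffordAlgebra.map (flipIso i j).toIsometry x * (eC r s i * eC r s j) =
      (eC r s i * eC r s j) * x := by
  induction x using CliffordAlgebra.induction with
  | algebraMap c => rw [AlgHom.commutes, Algebra.commutes]
  | add a b ha hb => rw [map_add, add_mul, mul_add, ha, hb]
  | mul a b ha hb => rw [map_mul, mul_assoc, hb, ← mul_assoc, ha, mul_assoc]
  | ι v =>
    rw [map_apply_ι]
    have hv : (flipIso i j).toIsometry v = flipLin r s i j v := rfl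
    rw [hv]
    -- linear in v; reduce to basis vectors
    have key : ∀ k : Fin (r + s),
        ι (Qrs r s) (flipLin r s i j (Pi.single k 1)) * (eC r s i * eC r s j) =
          (eC r s i * eC r s j) * ι (Qrs r s) (Pi.single k 1) := by
      intro k
      rw [flipLin_single]
      by_cases h : k = i ∨ k = j
      · rw [if_pos h, map_neg, neg_mul]
        rcases h with rfl | rfl
        · show -(eC r s k * (eC r s k * eC r s j)) = eC r s k * eC r s j * eC r s k
          rw [mul_assoc, eC_anticomm (Ne.symm hij), mul_neg, ← mul_assoc]
        · show -(eC r s k * (eC r s i * eC r s k)) = eC r s i * eC r s k * eC r s k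
          rw [← mul_assoc, eC_anticomm (Ne.symm hij), neg_mul, neg_neg]
      · rw [if_neg h]
        push_neg at h
        exact eC_mul_pair_left h.1 h.2
    have hdecomp : v = ∑ k, v k • (Pi.single k 1 : Fin (r + s) → ℝ) := by
      funext m
      rw [Finset.sum_apply]
      simp [Pi.single_apply]
    conv_lhs => rw [hdecomp]
    conv_rhs => rw [hdecomp]
    simp only [map_sum, map_smul, Finset.sum_mul, Finset.mul_sum, smul_mul_assoc,
      mul_smul_comm]
    exact Finset.sum_congr rfl fun k _ => congrArg _ (key k)

lemma pair_sq {i j : Fin (r + s)} (hij : i ≠ j) :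
    (eC r s i * eC r s j) * (eC r s i * eC r s j) =
      algebraMap ℝ _ (-(q r i * q r j)) := by
  rw [mul_assoc, ← mul_assoc (eC r s j), eC_anticomm (Ne.symm hij), neg_mul, mul_neg,
    mul_assoc (eC r s i), ← mul_assoc, eC_sq, eC_sq, ← map_mul, ← map_neg]
noncomputable def eL (r s : ℕ) (l : List (Fin (r + s))) : CliffordAlgebra (Qrs r s) :=
  (l.map (eC r s)).prod

@[simp] lemma eL_nil : eL r s [] = 1 := rfl

lemma eL_cons (i : Fin (r + s)) (l : List (Fin (r + s))) :
    eL r s (i :: l) = eC r s i * eL r s l := by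
  simp [eL]

noncomputable def eS (r s : ℕ) (S : Finset (Fin (r + s))) : CliffordAlgebra (Qrs r s) :=
  eL r s (S.sort (· ≤ ·))

instance : IsAntisymm (Fin (r + s)) (· < ·) :=
  ⟨fun _ _ h h' => (asymm h h').elim⟩

lemma eS_of_sorted {l : List (Fin (r + s))} (hl : l.Pairwise (· < ·)) :
    eS r s l.toFinset = eL r s l := by
  have h1 : (l.toFinset.sort (· ≤ ·)).Perm l := by
    apply List.perm_of_nodup_nodup_toFinset_eq (Finset.sort_nodup _ _) hl.nodup
    rw [Finset.sort_toFinset]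
  have h2 : l.toFinset.sort (· ≤ ·) = l :=
    List.Perm.eq_of_pairwise (fun a b _ _ h h' => (asymm h h').elim)
      (List.sortedLT_iff_pairwise.mp (Finset.sortedLT_sort _)) hl h1
  rw [eS, h2]

noncomputable def ins (i : Fin (r + s)) : List (Fin (r + s)) → List (Fin (r + s))
  | [] => [i]
  | j :: l => if i < j then i :: j :: l else if i = j then l else j :: ins i l

noncomputable def insc (r : ℕ) {s : ℕ} (i : Fin (r + s)) : List (Fin (r + s)) → ℝ
  | [] => 1
  | j :: l => if i < j then 1 else if i = j then q r i else -insc r i l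

lemma mem_ins {i k : Fin (r + s)} : ∀ {l : List (Fin (r + s))},
    k ∈ ins i l → k = i ∨ k ∈ l
  | [], h => by simpa [ins] using h
  | j :: l, h => by
    rw [ins] at h
    split_ifs at h with h1 h2
    · simpa using h
    · right; exact List.mem_cons_of_mem j h
    · rcases List.mem_cons.mp h with rfl | h'
      · right; exact List.mem_cons_self
      · rcases mem_ins h' with rfl | h'' 
        · exact Or.inl rfl
        · exact Or.inr (List.mem_cons_of_mem j h'')

lemma ins_sorted {i : Fin (r + s)} : ∀ {l : List (Fin (r + s))},
    l.Pairwise (· < ·) → (ins i l).Pairwise (· < ·)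
  | [], _ => by simp [ins]
  | j :: l, hl => by
    rw [ins]
    have hjl := List.pairwise_cons.mp hl
    split_ifs with h1 h2
    · exact List.pairwise_cons.mpr ⟨fun b hb => by
        rcases List.mem_cons.mp hb with rfl | hb'
        · exact h1
        · exact h1.trans (hjl.1 b hb'), hl⟩
    · exact hjl.2
    · have hji : j < i := by
        rcases lt_trichotomy i j with h | h | h
        · exact absurd h h1
        · exact absurd h h2
        · exact h
      refine List.pairwise_cons.mpr ⟨fun b hb => ?_, ins_sorted hjl.2⟩
      rcases mem_ins hb with rfl | hb'
      · exact hji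
      · exact hjl.1 b hb'

lemma eC_mul_eL (i : Fin (r + s)) : ∀ (l : List (Fin (r + s))),
    eC r s i * eL r s l = insc r i l • eL r s (ins i l)
  | [] => by simp [ins, insc, eL_cons]
  | j :: l => by
    rw [ins, insc, eL_cons]
    split_ifs with h1 h2
    · rw [eL_cons, eL_cons, one_smul]
    · subst h2
      rw [← mul_assoc, eC_sq, Algebra.smul_def]
    · rw [← mul_assoc, eC_anticomm (fun h => (by simp [h] at h1 h2 : False)), neg_mul,
        mul_assoc, eC_mul_eL i l, mul_smul_comm, eL_cons, neg_smul]
lemma eS_empty : eS r s (∅ : Finset (Fin (r + s))) = 1 := by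
  rw [eS, Finset.sort_empty, eL_nil]

lemma eC_mul_mem_span {i : Fin (r + s)} {t : CliffordAlgebra (Qrs r s)}
    (ht : t ∈ Submodule.span ℝ (Set.range (eS r s))) :
    eC r s i * t ∈ Submodule.span ℝ (Set.range (eS r s)) := by
  induction ht using Submodule.span_induction with
  | mem x hx =>
    obtain ⟨S, rfl⟩ := hx
    rw [eS, eC_mul_eL]
    have hsorted : (ins i (S.sort (· ≤ ·))).Pairwise (· < ·) :=
      ins_sorted (List.sortedLT_iff_pairwise.mp (Finset.sortedLT_sort _))
    rw [← eS_of_sorted hsorted]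
    exact Submodule.smul_mem _ _ (Submodule.subset_span (Set.mem_range_self _))
  | zero => simpa using Submodule.zero_mem _
  | add x y _ _ hx hy => rw [mul_add]; exact Submodule.add_mem _ hx hy
  | smul c x _ hx => rw [mul_smul_comm]; exact Submodule.smul_mem _ _ hx

lemma mul_mem_span (x : CliffordAlgebra (Qrs r s)) {t : CliffordAlgebra (Qrs r s)}
    (ht : t ∈ Submodule.span ℝ (Set.range (eS r s))) :
    x * t ∈ Submodule.span ℝ (Set.range (eS r s)) := by
  induction x using CliffordAlgebra.induction generalizing t with
  | algebraMap c => rw [Algebra.algebraMap_eq_smul_one, smul_mul_assoc, one_mul]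
                    exact Submodule.smul_mem _ _ ht
  | ι v =>
    have hdecomp : v = ∑ k, v k • (Pi.single k 1 : Fin (r + s) → ℝ) := by
      funext m; rw [Finset.sum_apply]; simp [Pi.single_apply]
    rw [hdecomp, map_sum, Finset.sum_mul]
    refine Submodule.sum_mem _ fun k _ => ?_
    rw [map_smul, smul_mul_assoc]
    exact Submodule.smul_mem _ _ (eC_mul_mem_span ht)
  | mul a b ha hb => rw [mul_assoc]; exact ha (hb ht)
  | add a b ha hb => rw [add_mul]; exact Submodule.add_mem _ (ha ht) (hb ht)

lemma mem_span_eS (x : CliffordAlgebra (Qrs r s)) :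
    x ∈ Submodule.span ℝ (Set.range (eS r s)) := by
  have h1 : (1 : CliffordAlgebra (Qrs r s)) ∈ Submodule.span ℝ (Set.range (eS r s)) := by
    rw [← eS_empty]; exact Submodule.subset_span (Set.mem_range_self _)
  simpa using mul_mem_span x h1
noncomputable def sgn (r : ℕ) {s : ℕ} (i : Fin (r + s)) (T : Finset (Fin (r + s))) : ℝ :=
  (if i ∈ T then 1 else q r i) * (-1) ^ (T.filter (· < i)).card

noncomputable def flipF (i : Fin (r + s)) (T : Finset (Fin (r + s))) : Finset (Fin (r + s)) :=
  if i ∈ T then T.erase i else insert i T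

lemma mem_flipF {i j : Fin (r + s)} {T : Finset (Fin (r + s))} :
    j ∈ flipF i T ↔ (if j = i then i ∉ T else j ∈ T) := by
  rw [flipF]
  by_cases hj : j = i
  · subst hj; by_cases hT : j ∈ T <;> simp [hT]
  · by_cases hT : i ∈ T <;> simp [hT, hj]

lemma flipF_flipF {i : Fin (r + s)} {T : Finset (Fin (r + s))} : flipF i (flipF i T) = T := by
  ext j
  by_cases hj : j = i
  · subst hj; simp [mem_flipF]
  · simp [mem_flipF, hj]

lemma flipF_comm {i j : Fin (r + s)} (hij : i ≠ j) (T : Finset (Fin (r + s))) :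
    flipF i (flipF j T) = flipF j (flipF i T) := by
  ext k
  by_cases hk : k = i
  · subst hk; simp [mem_flipF, hij, Ne.symm hij]
  · by_cases hk' : k = j
    · subst hk'; simp [mem_flipF, hk, hij, Ne.symm hij]
    · simp [mem_flipF, hk, hk']

lemma filter_flipF_self {i : Fin (r + s)} {T : Finset (Fin (r + s))} :
    (flipF i T).filter (· < i) = T.filter (· < i) := by
  ext j
  by_cases hj : j = i
  · subst hj; simp [Finset.mem_filter]
  · simp [Finset.mem_filter, mem_flipF, hj]

lemma pow_card_filter_flipF {i j : Fin (r + s)} (hij : i ≠ j) (T : Finset (Fin (r + s))) :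
    ((-1 : ℝ)) ^ ((flipF i T).filter (· < j)).card =
      (if i < j then (-1 : ℝ) else 1) * (-1) ^ (T.filter (· < j)).card := by
  by_cases hij' : i < j
  · rw [if_pos hij']
    by_cases hiT : i ∈ T
    · rw [flipF, if_pos hiT, Finset.filter_erase]
      have hmem : i ∈ T.filter (· < j) := Finset.mem_filter.mpr ⟨hiT, hij'⟩
      have hc := Finset.card_erase_add_one hmem
      rw [← hc, pow_succ]; ring
    · rw [flipF, if_neg hiT, Finset.filter_insert, if_pos hij',
        Finset.card_insert_of_notMem (fun h => hiT (Finset.mem_filter.mp h).1), pow_succ]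
      ring
  · rw [if_neg hij', one_mul]
    have hset : (flipF i T).filter (· < j) = T.filter (· < j) := by
      ext k
      by_cases hk : k = i
      · subst hk; simp [Finset.mem_filter, mem_flipF, hij']
      · simp [Finset.mem_filter, mem_flipF, hk]
    rw [hset]

lemma sgn_mul_sgn_self (i : Fin (r + s)) (T : Finset (Fin (r + s))) :
    sgn r i T * sgn r i (flipF i T) = q r i := by
  rw [sgn, sgn, filter_flipF_self]
  have hm : (i ∈ flipF i T) ↔ i ∉ T := by simp [mem_flipF]
  set C : ℝ := (-1 : ℝ) ^ (T.filter (· < i)).card with hC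
  have hpow : C * C = 1 := by rw [hC, ← mul_pow]; norm_num
  have hm' : (if i ∈ flipF i T then (1 : ℝ) else q r i) = (if i ∈ T then q r i else 1) := by
    by_cases hiT : i ∈ T <;> simp [hm, hiT]
  rw [hm']
  by_cases hiT : i ∈ T
  · rw [if_pos hiT, if_pos hiT]
    calc (1 : ℝ) * C * (q r i * C) = q r i * (C * C) := by ring
      _ = q r i := by rw [hpow, mul_one]
  · rw [if_neg hiT, if_neg hiT]
    calc q r i * C * (1 * C) = q r i * (C * C) := by ring
      _ = q r i := by rw [hpow, mul_one]

lemma sgn_anticomm {i j : Fin (r + s)} (hij : i ≠ j) (T : Finset (Fin (r + s))) :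
    sgn r i T * sgn r j (flipF i T) = -(sgn r j T * sgn r i (flipF j T)) := by
  have hmj : (j ∈ flipF i T) ↔ j ∈ T := by simp [mem_flipF, hij.symm]
  have hmi : (i ∈ flipF j T) ↔ i ∈ T := by simp [mem_flipF, hij]
  have key : (if i < j then (-1 : ℝ) else 1) = -(if j < i then (-1 : ℝ) else 1) := by
    rcases lt_trichotomy i j with h | h | h
    · rw [if_pos h, if_neg (asymm h)]; try norm_num
    · exact absurd h hij
    · rw [if_neg (asymm h), if_pos h]; try norm_num
  rw [sgn, sgn, sgn, sgn, pow_card_filter_flipF hij, pow_card_filter_flipF hij.symm,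
    if_congr hmj rfl rfl, if_congr hmi rfl rfl, key]
  ring

noncomputable def rho (r s : ℕ) (i : Fin (r + s)) :
    Module.End ℝ (Finset (Fin (r + s)) → ℝ) where
  toFun w := fun T => sgn r i T * w (flipF i T)
  map_add' w₁ w₂ := by funext T; simp [mul_add]
  map_smul' c w := by funext T; simp [smul_eq_mul]; ring

lemma rho_apply (i : Fin (r + s)) (w : Finset (Fin (r + s)) → ℝ) (T : Finset (Fin (r + s))) :
    rho r s i w T = sgn r i T * w (flipF i T) := rfl

lemma rho_sq (i : Fin (r + s)) :
    rho r s i * rho r s i = algebraMap ℝ _ (q r i) := by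
  apply LinearMap.ext; intro w; funext T
  rw [Module.End.mul_apply, rho_apply, rho_apply, flipF_flipF, Module.algebraMap_end_apply,
    ← mul_assoc, sgn_mul_sgn_self]
  rfl

lemma rho_anticomm {i j : Fin (r + s)} (hij : i ≠ j) :
    rho r s i * rho r s j = -(rho r s j * rho r s i) := by
  apply LinearMap.ext; intro w; funext T
  rw [Module.End.mul_apply, LinearMap.neg_apply, Module.End.mul_apply]
  show rho r s i (rho r s j w) T = (-(rho r s j (rho r s i w))) T
  rw [rho_apply, rho_apply, Pi.neg_apply, rho_apply, rho_apply, flipF_comm hij,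
    ← mul_assoc, ← mul_assoc, sgn_anticomm hij]
  ring

noncomputable def phi (r s : ℕ) :
    (Fin (r + s) → ℝ) →ₗ[ℝ] Module.End ℝ (Finset (Fin (r + s)) → ℝ) where
  toFun v := ∑ i, v i • rho r s i
  map_add' v₁ v₂ := by simp [add_smul, Finset.sum_add_distrib]
  map_smul' c v := by simp [mul_smul, Finset.smul_sum]

lemma phi_single (i : Fin (r + s)) : phi r s (Pi.single i 1) = rho r s i := by
  have h0 : phi r s (Pi.single i 1) =
      ∑ k, (Pi.single i (1 : ℝ) : Fin (r + s) → ℝ) k • rho r s k := rfl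
  rw [h0, Finset.sum_eq_single i]
  · simp
  · intro k _ hk; simp [Pi.single_apply, hk]
  · simp

lemma phi_sq (v : Fin (r + s) → ℝ) :
    phi r s v * phi r s v = algebraMap ℝ _ (Qrs r s v) := by
  have expand : phi r s v * phi r s v =
      ∑ i, ∑ j, (v i * v j) • (rho r s i * rho r s j) := by
    show (∑ i, v i • rho r s i) * (∑ j, v j • rho r s j) = _
    rw [Finset.sum_mul_sum]
    exact Finset.sum_congr rfl fun i _ => Finset.sum_congr rfl fun j _ =>
      smul_mul_smul_comm (v i) (rho r s i) (v j) (rho r s j)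
  set g : Fin (r + s) → Fin (r + s) → Module.End ℝ (Finset (Fin (r + s)) → ℝ) :=
    fun i j => (v i * v j) • (rho r s i * rho r s j) with hg
  have hskew : ∀ i j, i ≠ j → g i j + g j i = 0 := by
    intro i j hij
    rw [hg]
    simp only
    rw [rho_anticomm hij, smul_neg, mul_comm (v i) (v j)]
    exact neg_add_cancel _
  have hsym : (∑ i, ∑ j, g i j) = ∑ i, ∑ j, g j i := Finset.sum_comm
  have hDD : (∑ i, ∑ j, g i j) + (∑ i, ∑ j, g i j) = ∑ i, (g i i + g i i) := by
    nth_rewrite 2 [hsym]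
    rw [← Finset.sum_add_distrib]
    refine Finset.sum_congr rfl fun i _ => ?_
    rw [← Finset.sum_add_distrib, Finset.sum_eq_single i]
    · intro j _ hj; exact hskew i j (Ne.symm hj)
    · intro h; exact absurd (Finset.mem_univ i) h
  have hdiag : ∀ i, g i i = (v i * v i * q r i) • (1 : Module.End ℝ (Finset (Fin (r + s)) → ℝ)) := by
    intro i
    rw [hg]; simp only
    rw [rho_sq, Algebra.algebraMap_eq_smul_one, smul_smul]
  have hQ : Qrs r s v = ∑ i, v i * v i * q r i := by
    rw [Qrs, QuadraticMap.weightedSumSquares_apply]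
    refine Finset.sum_congr rfl fun i _ => ?_
    simp only [q, smul_eq_mul]
    ring
  rw [expand]
  have h2 : (2 : ℝ) • (∑ i, ∑ j, g i j) =
      (2 : ℝ) • ((Qrs r s v) • (1 : Module.End ℝ (Finset (Fin (r + s)) → ℝ))) := by
    rw [two_smul, hDD, hQ, Finset.sum_smul, Finset.smul_sum]
    refine Finset.sum_congr rfl fun i _ => ?_
    rw [hdiag i]
    exact (two_smul ℝ _).symm
  have := smul_right_injective (Module.End ℝ (Finset (Fin (r + s)) → ℝ))
    (show (2 : ℝ) ≠ 0 from two_ne_zero) h2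
  rw [this, Algebra.algebraMap_eq_smul_one]

noncomputable def rep (r s : ℕ) :
    CliffordAlgebra (Qrs r s) →ₐ[ℝ] Module.End ℝ (Finset (Fin (r + s)) → ℝ) :=
  CliffordAlgebra.lift (Qrs r s) ⟨phi r s, phi_sq⟩

lemma rep_eC (i : Fin (r + s)) : rep r s (eC r s i) = rho r s i := by
  rw [rep, eC, lift_ι_apply, phi_single]
lemma rho_single_lt {i : Fin (r + s)} {S : Finset (Fin (r + s))} (hiS : i ∉ S)
    (hbound : ∀ j ∈ S, i < j) :
    rho r s i (Pi.single S 1) = Pi.single (insert i S) 1 := by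
  funext T
  rw [rho_apply, Pi.single_apply, Pi.single_apply]
  have hiff : flipF i T = S ↔ T = insert i S := by
    constructor
    · intro h
      have : flipF i (flipF i T) = flipF i S := by rw [h]
      rw [flipF_flipF] at this
      rw [this, flipF, if_neg hiS]
    · rintro rfl
      rw [flipF, if_pos (Finset.mem_insert_self i S), Finset.erase_insert hiS]
  by_cases hT : T = insert i S
  · rw [if_pos (hiff.mpr hT), if_pos hT, mul_one]
    subst hT
    rw [sgn, if_pos (Finset.mem_insert_self i S)]
    have hfilter : (insert i S).filter (· < i) = ∅ := by
      rw [Finset.filter_eq_empty_iff]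
      intro j hj
      rcases Finset.mem_insert.mp hj with rfl | hj'
      · exact lt_irrefl j
      · exact not_lt_of_gt (hbound j hj')
    rw [hfilter, Finset.card_empty, pow_zero, one_mul]
  · rw [if_neg (fun h => hT (hiff.mp h)), if_neg hT, mul_zero]

lemma rep_eL : ∀ {l : List (Fin (r + s))}, l.Pairwise (· < ·) →
    rep r s (eL r s l) (Pi.single ∅ 1) = Pi.single l.toFinset 1
  | [], _ => by rw [eL_nil, map_one]; rfl
  | i :: l, hl => by
    have hl' := List.pairwise_cons.mp hl
    rw [eL_cons, map_mul, Module.End.mul_apply, rep_eL hl'.2, rep_eC, List.toFinset_cons]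
    apply rho_single_lt
    · intro h
      exact lt_irrefl i (hl'.1 i (List.mem_toFinset.mp h))
    · intro j hj
      exact hl'.1 j (List.mem_toFinset.mp hj)

lemma rep_eS (S : Finset (Fin (r + s))) :
    rep r s (eS r s S) (Pi.single ∅ 1) = Pi.single S 1 := by
  rw [eS, rep_eL (List.sortedLT_iff_pairwise.mp (Finset.sortedLT_sort S)), Finset.sort_toFinset S (· ≤ ·)]

/-- Moving `eC k` through a product of distinct generators. -/
lemma eC_mul_eL_swap (k : Fin (r + s)) : ∀ (l : List (Fin (r + s))), l.Nodup →
    eC r s k * eL r s l =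
      (((-1 : ℝ) ^ l.length) * (if k ∈ l then -1 else 1)) • (eL r s l * eC r s k)
  | [], _ => by simp
  | m :: l, hnd => by
    have hnd' := List.nodup_cons.mp hnd
    by_cases hmk : m = k
    · subst hmk
      rw [if_pos (List.mem_cons_self (a := m) (l := l)), eL_cons, ← mul_assoc, eC_sq]
      have hrec := eC_mul_eL_swap m l hnd'.2
      rw [if_neg hnd'.1] at hrec
      have hswap : eL r s l * eC r s m = ((-1 : ℝ) ^ l.length) • (eC r s m * eL r s l) := by
        rw [hrec, mul_one, smul_smul, ← mul_pow]
        norm_num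
      rw [mul_assoc, hswap]
      rw [List.length_cons, pow_succ, mul_smul_comm, smul_smul]
      have : ((-1 : ℝ) ^ l.length * -1 * -1) * (-1 : ℝ) ^ l.length = 1 := by
        rw [show ((-1 : ℝ) ^ l.length * -1 * -1) * (-1 : ℝ) ^ l.length
          = ((-1 : ℝ) ^ l.length * (-1 : ℝ) ^ l.length) by ring, ← mul_pow]
        norm_num
      rw [this, one_smul, ← mul_assoc, eC_sq]
    · have hkm : k ≠ m := Ne.symm hmk
      rw [eL_cons]
      have h1 : eC r s k * (eC r s m * eL r s l) = -(eC r s m * (eC r s k * eL r s l)) := by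
        rw [← mul_assoc, eC_anticomm hkm, neg_mul, mul_assoc]
      rw [h1, eC_mul_eL_swap k l hnd'.2, mul_smul_comm, ← mul_assoc, ← neg_smul]
      congr 1
      simp only [List.length_cons, pow_succ, List.mem_cons]
      have hif : (if k = m ∨ k ∈ l then (-1 : ℝ) else 1) = (if k ∈ l then -1 else 1) := by
        by_cases h : k ∈ l <;> simp [h, hkm]
      rw [hif]
      ring
lemma pair_swap_eS {i j : Fin (r + s)} (hij : i ≠ j) (T : Finset (Fin (r + s))) :
    (eC r s i * eC r s j) * eS r s T =
      ((if i ∈ T then (-1 : ℝ) else 1) * (if j ∈ T then (-1 : ℝ) else 1)) •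
        (eS r s T * (eC r s i * eC r s j)) := by
  have hnd : (T.sort (· ≤ ·)).Nodup := Finset.sort_nodup _ _
  have hj' := eC_mul_eL_swap j (T.sort (· ≤ ·)) hnd
  have hi' := eC_mul_eL_swap i (T.sort (· ≤ ·)) hnd
  rw [eS]
  rw [mul_assoc, hj', mul_smul_comm, ← mul_assoc, hi', smul_mul_assoc, smul_smul,
    ← mul_assoc]
  rw [show eL r s (T.sort (· ≤ ·)) * (eC r s i * eC r s j)
    = eL r s (T.sort (· ≤ ·)) * eC r s i * eC r s j from (mul_assoc _ _ _).symm]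
  congr 1
  have hmi : (i ∈ T.sort (· ≤ ·)) = (i ∈ T) := propext (Finset.mem_sort _)
  have hmj : (j ∈ T.sort (· ≤ ·)) = (j ∈ T) := propext (Finset.mem_sort _)
  simp only [hmi, hmj]
  have hpow : ((-1 : ℝ) ^ (T.sort (· ≤ ·)).length) * ((-1 : ℝ) ^ (T.sort (· ≤ ·)).length) = 1 := by
    rw [← mul_pow]; norm_num
  linear_combination ((if i ∈ T then (-1:ℝ) else 1) * (if j ∈ T then (-1:ℝ) else 1)) * hpow

lemma eS_univ : eS r s (Finset.univ : Finset (Fin (r + s))) = volumeElt r s := by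
  rw [eS, Fin.sort_univ, volumeElt, List.ofFn_eq_map]
  rfl

lemma rep_one_delta : rep r s (1 : CliffordAlgebra (Qrs r s)) (Pi.single ∅ 1) =
    Pi.single (∅ : Finset (Fin (r + s))) 1 := by
  rw [map_one]; rfl

lemma rep_vol_delta : rep r s (volumeElt r s) (Pi.single ∅ 1) =
    Pi.single (Finset.univ : Finset (Fin (r + s))) 1 := by
  rw [← eS_univ, rep_eS]

lemma coeff_unique (hrs : 1 ≤ r + s) {x₁ y₁ x₂ y₂ : ℝ}
    (h : x₁ • (1 : CliffordAlgebra (Qrs r s)) + y₁ • volumeElt r s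
       = x₂ • (1 : CliffordAlgebra (Qrs r s)) + y₂ • volumeElt r s) :
    x₁ = x₂ ∧ y₁ = y₂ := by
  have hne : (∅ : Finset (Fin (r + s))) ≠ Finset.univ := by
    haveI : Nonempty (Fin (r + s)) := ⟨⟨0, hrs⟩⟩
    exact Ne.symm (Finset.nonempty_iff_ne_empty.mp Finset.univ_nonempty)
  have h2 := congrArg (fun x => rep r s x (Pi.single ∅ 1)) h
  simp only [map_add, map_smul, LinearMap.add_apply, LinearMap.smul_apply,
    rep_one_delta, rep_vol_delta] at h2
  constructor
  · have := congrFun h2 ∅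
    simpa [Pi.single_apply, hne] using this
  · have := congrFun h2 Finset.univ
    simpa [Pi.single_apply, Ne.symm hne] using this
end EP

/-- When `ω² = -1`, the only `SO(r,s)`-equivariant projections of `Cl(r,s)`
onto a submodule are `0` and the identity. -/
theorem equivariant_projection_eq_zero_or_id (r s : ℕ) (hrs : 1 ≤ r + s)
    (hω : volumeElt r s ^ 2 = -1)
    (P : CliffordAlgebra (Qrs r s) →ₗ[ℝ] CliffordAlgebra (Qrs r s))
    (h1 : ∀ x, P (P x) = P x)
    (h2 : ∀ x y, P (x * y) = x * P y)
    (h3 : ∀ f : (Qrs r s).IsometryEquiv (Qrs r s), IsSpecial f →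
      ∀ x, P (CliffordAlgebra.map f.toIsometry x) =
        CliffordAlgebra.map f.toIsometry (P x)) :
    P = 0 ∨ P = LinearMap.id := by
  classical
  have hPx : ∀ x, P x = x * P 1 := fun x => by rw [← h2 x 1, mul_one]
  have ha2 : P 1 * P 1 = P 1 := by
    have h := h1 1
    rwa [hPx (P 1)] at h
  have hfix : ∀ i j : Fin (r + s), i ≠ j →
      P 1 * (EP.eC r s i * EP.eC r s j) = (EP.eC r s i * EP.eC r s j) * P 1 := by
    intro i j hij
    have h := h3 (EP.flipIso i j) (EP.flipIso_special hij) 1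
    rw [map_one] at h
    have hconj := EP.map_flip_mul hij (P 1)
    rw [← h] at hconj
    exact hconj
  obtain ⟨c, hc⟩ := (Submodule.mem_span_range_iff_exists_fun ℝ).mp (EP.mem_span_eS (P 1))
  have hczero : ∀ S : Finset (Fin (r + s)), S ≠ ∅ → S ≠ Finset.univ → c S = 0 := by
    intro S hS1 hS2
    obtain ⟨i, hi⟩ := Finset.nonempty_iff_ne_empty.mpr hS1
    obtain ⟨j, hj⟩ : ∃ j, j ∉ S := by
      by_contra hcon
      push_neg at hcon
      exact hS2 (Finset.eq_univ_iff_forall.mpr hcon)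
    have hij : i ≠ j := fun h => hj (h ▸ hi)
    have hcomm := hfix i j hij
    have e1 : (EP.eC r s i * EP.eC r s j) * P 1
        = ∑ T, (c T * ((if i ∈ T then (-1:ℝ) else 1) * (if j ∈ T then (-1:ℝ) else 1))) •
            (EP.eS r s T * (EP.eC r s i * EP.eC r s j)) := by
      rw [← hc, Finset.mul_sum]
      refine Finset.sum_congr rfl fun T _ => ?_
      rw [mul_smul_comm, EP.pair_swap_eS hij T, smul_smul]
    have e2 : P 1 * (EP.eC r s i * EP.eC r s j)
        = ∑ T, c T • (EP.eS r s T * (EP.eC r s i * EP.eC r s j)) := by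
      rw [← hc, Finset.sum_mul]
      exact Finset.sum_congr rfl fun T _ => smul_mul_assoc _ _ _
    have e3 : ∑ T, ((c T * ((if i ∈ T then (-1:ℝ) else 1) * (if j ∈ T then (-1:ℝ) else 1)))
          - c T) • (EP.eS r s T * (EP.eC r s i * EP.eC r s j)) = 0 := by
      calc ∑ T, ((c T * ((if i ∈ T then (-1:ℝ) else 1) * (if j ∈ T then (-1:ℝ) else 1)))
              - c T) • (EP.eS r s T * (EP.eC r s i * EP.eC r s j))
          = (∑ T, (c T * ((if i ∈ T then (-1:ℝ) else 1) * (if j ∈ T then (-1:ℝ) else 1))) •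
              (EP.eS r s T * (EP.eC r s i * EP.eC r s j)))
            - ∑ T, c T • (EP.eS r s T * (EP.eC r s i * EP.eC r s j)) := by
            rw [← Finset.sum_sub_distrib]
            exact Finset.sum_congr rfl fun T _ => sub_smul _ _ _
        _ = (EP.eC r s i * EP.eC r s j) * P 1 - P 1 * (EP.eC r s i * EP.eC r s j) := by
            rw [e1, e2]
        _ = 0 := by rw [hcomm]; exact sub_self _
    have e4 : ∑ T, (((c T * ((if i ∈ T then (-1:ℝ) else 1) * (if j ∈ T then (-1:ℝ) else 1)))
          - c T) * (-(EP.q r i * EP.q r j))) • EP.eS r s T = 0 := by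
      have h5 := congrArg (· * (EP.eC r s i * EP.eC r s j)) e3
      simp only [zero_mul] at h5
      rw [Finset.sum_mul] at h5
      calc ∑ T, (((c T * ((if i ∈ T then (-1:ℝ) else 1) * (if j ∈ T then (-1:ℝ) else 1)))
              - c T) * (-(EP.q r i * EP.q r j))) • EP.eS r s T
          = ∑ T, (((c T * ((if i ∈ T then (-1:ℝ) else 1) * (if j ∈ T then (-1:ℝ) else 1)))
              - c T) • (EP.eS r s T * (EP.eC r s i * EP.eC r s j))) *
                (EP.eC r s i * EP.eC r s j) := by
            refine Finset.sum_congr rfl fun T _ => ?_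
            rw [smul_mul_assoc, mul_assoc, EP.pair_sq hij, ← Algebra.commutes,
              ← Algebra.smul_def, smul_smul]
        _ = 0 := h5
    have h6 := congrArg (fun x => EP.rep r s x (Pi.single ∅ 1)) e4
    simp only [map_sum, map_smul, map_zero, LinearMap.sum_apply, LinearMap.smul_apply,
      LinearMap.zero_apply, EP.rep_eS] at h6
    have h7 := congrFun h6 S
    rw [Finset.sum_apply] at h7
    simp only [Pi.smul_apply, Pi.single_apply, smul_eq_mul, mul_ite, mul_one, mul_zero,
      Finset.sum_ite_eq, Finset.mem_univ, if_true, Pi.zero_apply] at h7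
    have hq : EP.q r i * EP.q r j ≠ 0 :=
      mul_ne_zero (EP.q_ne_zero i) (EP.q_ne_zero j)
    rcases mul_eq_zero.mp h7 with h8 | h8
    · simp only [hi, hj, if_true, if_false, mul_one, mul_neg] at h8
      linarith
    · exact absurd (neg_eq_zero.mp h8) hq
  haveI : Nonempty (Fin (r + s)) := ⟨⟨0, hrs⟩⟩
  have hne : (∅ : Finset (Fin (r + s))) ≠ Finset.univ :=
    Ne.symm (Finset.nonempty_iff_ne_empty.mp Finset.univ_nonempty)
  have hsum : P 1 = c ∅ • (1 : CliffordAlgebra (Qrs r s)) + c Finset.univ • volumeElt r s := by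
    have hadd := Fintype.sum_eq_add (f := fun T => c T • EP.eS r s T) ∅ Finset.univ hne
      (fun T hT => by
        show c T • EP.eS r s T = 0
        rw [hczero T hT.1 hT.2, zero_smul])
    rw [← hc, hadd]
    simp only [EP.eS_empty, EP.eS_univ]
  have hvv : volumeElt r s * volumeElt r s = -(1 : CliffordAlgebra (Qrs r s)) := by
    rw [← pow_two, hω]
  have hmul : P 1 * P 1 = (c ∅ * c ∅ - c Finset.univ * c Finset.univ) •
      (1 : CliffordAlgebra (Qrs r s)) + (2 * (c ∅ * c Finset.univ)) • volumeElt r s := by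
    rw [hsum, mul_add, add_mul, add_mul, smul_mul_smul_comm, smul_mul_smul_comm,
      smul_mul_smul_comm, smul_mul_smul_comm, one_mul, one_mul, mul_one, hvv, smul_neg]
    module
  have heq : (c ∅ * c ∅ - c Finset.univ * c Finset.univ) • (1 : CliffordAlgebra (Qrs r s))
      + (2 * (c ∅ * c Finset.univ)) • volumeElt r s
      = c ∅ • (1 : CliffordAlgebra (Qrs r s)) + c Finset.univ • volumeElt r s := by
    rw [← hmul, ha2, hsum]
  obtain ⟨hα, hβ⟩ := EP.coeff_unique hrs heq
  have hβ0 : c Finset.univ = 0 := by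
    have hfac : c Finset.univ * (2 * c ∅ - 1) = 0 := by linear_combination hβ
    rcases mul_eq_zero.mp hfac with h8 | h8
    · exact h8
    · exfalso
      have hα2 : c ∅ = 1/2 := by linarith
      rw [hα2] at hα
      nlinarith [sq_nonneg (c Finset.univ)]
  have hα2 : c ∅ * (c ∅ - 1) = 0 := by
    rw [hβ0] at hα
    linear_combination hα
  have hP1 : P 1 = c ∅ • (1 : CliffordAlgebra (Qrs r s)) := by
    rw [hsum, hβ0, zero_smul, add_zero]
  rcases mul_eq_zero.mp hα2 with h8 | h8
  · left
    apply LinearMap.ext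
    intro x
    rw [hPx x, hP1, h8, zero_smul, mul_zero, LinearMap.zero_apply]
  · right
    apply LinearMap.ext
    intro x
    have h9 : c ∅ = 1 := by linarith
    rw [hPx x, hP1, h9, one_smul, mul_one, LinearMap.id_apply]
end
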